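/- arXiv:2511.21112 — 9 statements merged into one kernel-verified Lean document; each statement's English description precedes it below -/
import Mathlib

section
/- Let n ≥ 2 be even and t ≥ 1. Then there exists a finite simple graph H* of order n + t and a coalition partition π* of H* such that the coalition graph CG(H*, π*) is isomorphic to the disjoint union of the complete graph K_n and t isolated vertices. -/
open scoped Classical

/-- A dominating set (as a finset): every vertex outside `S` has a neighbor in `S`. -/
def IsDomSet {V : Type*} (G : SimpleGraph V) (S : Finset V) : Prop :=
  ∀ v, v ∉ S → ∃ u ∈ S, G.Adj u v

/-- Two (distinct) sets form a coalition: neither dominates, but their union does. -/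
def IsCoalition {V : Type*} (G : SimpleGraph V) (A B : Finset V) : Prop :=
  A ≠ B ∧ ¬ IsDomSet G A ∧ ¬ IsDomSet G B ∧ IsDomSet G (A ∪ B)

/-- A coalition partition (c-partition) of the vertex set of `G`. -/
def IsCPartition {V : Type*} [Fintype V] (G : SimpleGraph V) (π : Finset (Finset V)) : Prop :=
  (∀ A ∈ π, A.Nonempty) ∧
  (∀ A ∈ π, ∀ B ∈ π, A ≠ B → Disjoint A B) ∧
  (∀ v : V, ∃ A ∈ π, v ∈ A) ∧
  (∀ A ∈ π, (∃ v, A = {v} ∧ IsDomSet G A) ∨ ∃ B ∈ π, IsCoalition G A B)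

/-- Number of distinct (unordered) coalitions in the partition `π`. -/
noncomputable def cpCount {V : Type*} [Fintype V] (G : SimpleGraph V)
    (π : Finset (Finset V)) : ℕ :=
  ((π ×ˢ π).filter (fun p => IsCoalition G p.1 p.2)).card / 2

/-- The coalition count `c(G)`: maximum number of distinct coalitions over c-partitions. -/
noncomputable def coalitionCount {V : Type*} [Fintype V] (G : SimpleGraph V) : ℕ :=
  sSup {k | ∃ π, IsCPartition G π ∧ k = cpCount G π}

/-- The coalition number `C(G)`: maximum order of a c-partition. -/
noncomputable def coalitionNumber {V : Type*} [Fintype V] (G : SimpleGraph V) : ℕ :=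
  sSup {k | ∃ π, IsCPartition G π ∧ k = π.card}

/-- The coalition graph `CG(G, π)`. -/
def coalitionGraph {V : Type*} (G : SimpleGraph V) (π : Finset (Finset V)) :
    SimpleGraph {A // A ∈ π} where
  Adj A B := IsCoalition G A.1 B.1
  symm := by
    constructor
    rintro A B ⟨h1, h2, h3, h4⟩
    exact ⟨fun h => h1 h.symm, h3, h2, by rwa [Finset.union_comm]⟩
  loopless := by
    constructor
    rintro A ⟨h1, -⟩
    exact h1 rfl

/-- The set of full vertices (vertices of degree `n - 1`). -/
noncomputable def fullVertices {V : Type*} [Fintype V] (G : SimpleGraph V) : Finset V :=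
  Finset.univ.filter (fun v => G.degree v = Fintype.card V - 1)

/-- The domatic number: maximum order of a partition into dominating sets. -/
noncomputable def domaticNumber {V : Type*} [Fintype V] (G : SimpleGraph V) : ℕ :=
  sSup {k | ∃ P : Finset (Finset V),
    (∀ A ∈ P, A.Nonempty) ∧
    (∀ A ∈ P, ∀ B ∈ P, A ≠ B → Disjoint A B) ∧
    (∀ v : V, ∃ A ∈ P, v ∈ A) ∧
    (∀ A ∈ P, IsDomSet G A) ∧ k = P.card}

/-- The independence number of `G`. -/
noncomputable def indepNumber {V : Type*} [Fintype V] (G : SimpleGraph V) : ℕ :=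
  sSup {k | ∃ s : Finset V, (∀ a ∈ s, ∀ b ∈ s, ¬ G.Adj a b) ∧ k = s.card}

/-- The disjoint union of the complete graph `K_n` (on the first `n` vertices)
and `t` isolated vertices, realized on `Fin (n + t)`. -/
def KnUnionIsolated (n t : ℕ) : SimpleGraph (Fin (n + t)) where
  Adj a b := a ≠ b ∧ (a : ℕ) < n ∧ (b : ℕ) < n
  symm := by constructor; rintro a b ⟨h1, h2, h3⟩; exact ⟨h1.symm, h3, h2⟩
  loopless := by constructor; rintro a ⟨h, -⟩; exact h rfl

/-- Auxiliary graph: complete graph on `Fin (n+t)` minus a perfect matching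
on the first `n` vertices (pairing `2k` with `2k+1`). -/
def Hstar (n t : ℕ) : SimpleGraph (Fin (n + t)) where
  Adj a b := a ≠ b ∧ ¬((a : ℕ) < n ∧ (b : ℕ) < n ∧ (a : ℕ) / 2 = (b : ℕ) / 2)
  symm := by constructor; rintro a b ⟨h1, h2⟩; exact ⟨h1.symm, fun ⟨x, y, z⟩ => h2 ⟨y, x, z.symm⟩⟩
  loopless := by constructor; rintro a ⟨h, -⟩; exact h rfl

/-- For even `n ≥ 2` and `t ≥ 1`, there is a graph `H*` of order `n + t`
with a coalition partition `π*` such that `CG(H*, π*) ≅ K_n ∪ tK_1`. -/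
theorem stmt_1 (n t : ℕ) (hn : 2 ≤ n) (hev : Even n) (ht : 1 ≤ t) :
    ∃ (H : SimpleGraph (Fin (n + t))) (π : Finset (Finset (Fin (n + t)))),
      IsCPartition H π ∧ Nonempty (coalitionGraph H π ≃g KnUnionIsolated n t) := by
  classical
  obtain ⟨m, hm⟩ := hev
  set H := Hstar n t with hH
  set π : Finset (Finset (Fin (n + t))) :=
    Finset.univ.image (fun v => ({v} : Finset (Fin (n + t)))) with hπ
  have hmemπ : ∀ A, A ∈ π ↔ ∃ v, A = {v} := by
    intro A
    simp [hπ, eq_comm]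
  -- partner of a vertex with value < n
  have hpartner : ∀ v : Fin (n + t), (v : ℕ) < n →
      ∃ p : Fin (n + t), p ≠ v ∧ (p : ℕ) < n ∧ (p : ℕ) / 2 = (v : ℕ) / 2 := by
    intro v hv
    by_cases h : (v : ℕ) % 2 = 0
    · refine ⟨⟨(v : ℕ) + 1, by omega⟩, ?_, by simp; omega, by simp; omega⟩
      simp [Fin.ext_iff]
    · refine ⟨⟨(v : ℕ) - 1, by omega⟩, ?_, by simp; omega, by simp; omega⟩
      simp [Fin.ext_iff]; omega
  -- singletons of full vertices dominate
  have hdomFull : ∀ v : Fin (n + t), ¬ (v : ℕ) < n → IsDomSet H ({v} : Finset _) := by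
    intro v hv u hu
    refine ⟨v, Finset.mem_singleton_self v, ?_⟩
    rw [Finset.mem_singleton] at hu
    exact ⟨fun h => hu h.symm, fun ⟨h1, _, _⟩ => hv h1⟩
  -- singletons of small vertices do not dominate
  have hnotDom : ∀ v : Fin (n + t), (v : ℕ) < n → ¬ IsDomSet H ({v} : Finset _) := by
    intro v hv hd
    obtain ⟨p, hp1, hp2, hp3⟩ := hpartner v hv
    obtain ⟨u, hu, hadj⟩ := hd p (by simp [hp1])
    rw [Finset.mem_singleton] at hu
    subst hu
    exact hadj.2 ⟨hv, hp2, hp3.symm⟩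
  -- any two distinct small singletons have dominating union
  have hdomPair : ∀ v w : Fin (n + t), v ≠ w → (v : ℕ) < n → (w : ℕ) < n →
      IsDomSet H ({v} ∪ {w} : Finset _) := by
    intro v w hvw hv hw u hu
    simp only [Finset.mem_union, Finset.mem_singleton, not_or] at hu
    obtain ⟨hu1, hu2⟩ := hu
    by_cases hcase : (u : ℕ) < n ∧ (v : ℕ) / 2 = (u : ℕ) / 2
    · refine ⟨w, by simp, fun h => hu2 h.symm, fun ⟨h1, h2, h3⟩ => ?_⟩
      have : (v : ℕ) = (w : ℕ) := by omega
      exact hvw (Fin.val_injective this)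
    · refine ⟨v, by simp, fun h => hu1 h.symm, fun ⟨h1, h2, h3⟩ => hcase ⟨h2, h3⟩⟩
  -- coalition characterization
  have hcoal : ∀ v w : Fin (n + t),
      IsCoalition H ({v} : Finset _) {w} ↔ v ≠ w ∧ (v : ℕ) < n ∧ (w : ℕ) < n := by
    intro v w
    constructor
    · rintro ⟨h1, h2, h3, h4⟩
      refine ⟨fun h => h1 (by rw [h]), ?_, ?_⟩
      · by_contra hc; exact h2 (hdomFull v hc)
      · by_contra hc; exact h3 (hdomFull w hc)
    · rintro ⟨h1, h2, h3⟩
      refine ⟨fun h => h1 (Finset.singleton_injective h), hnotDom v h2, hnotDom w h3, ?_⟩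
      have h4 := hdomPair v w h1 h2 h3
      convert h4 using 2
      congr 1
      exact Subsingleton.elim _ _
  refine ⟨H, π, ⟨?_, ?_, ?_, ?_⟩, ?_⟩
  · intro A hA; obtain ⟨v, rfl⟩ := (hmemπ A).1 hA; exact ⟨v, Finset.mem_singleton_self v⟩
  · intro A hA B hB hAB
    obtain ⟨v, rfl⟩ := (hmemπ A).1 hA
    obtain ⟨w, rfl⟩ := (hmemπ B).1 hB
    simp only [Finset.disjoint_singleton]
    intro h; exact hAB (by rw [h])
  · intro v; exact ⟨{v}, (hmemπ _).2 ⟨v, rfl⟩, Finset.mem_singleton_self v⟩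
  · intro A hA
    obtain ⟨v, rfl⟩ := (hmemπ A).1 hA
    by_cases hv : (v : ℕ) < n
    · right
      obtain ⟨p, hp1, hp2, hp3⟩ := hpartner v hv
      exact ⟨{p}, (hmemπ _).2 ⟨p, rfl⟩,
        (hcoal v p).2 ⟨fun h => hp1 h.symm, hv, hp2⟩⟩
    · left; exact ⟨v, rfl, hdomFull v hv⟩
  · -- the isomorphism
    have hbij : Function.Bijective
        (fun v : Fin (n + t) => (⟨{v}, (hmemπ _).2 ⟨v, rfl⟩⟩ : {A // A ∈ π})) := by
      constructor
      · intro a b hab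
        exact Finset.singleton_injective (congrArg Subtype.val hab)
      · rintro ⟨A, hA⟩
        obtain ⟨v, rfl⟩ := (hmemπ A).1 hA
        exact ⟨v, rfl⟩
    let e : KnUnionIsolated n t ≃g coalitionGraph H π :=
      ⟨Equiv.ofBijective _ hbij, by
        intro v w
        simp only [Equiv.ofBijective_apply, coalitionGraph]
        rw [hcoal]
        rfl⟩
    exact ⟨e.symm⟩
end

section
/- For any finite simple graph G with no isolated vertices having exactly f full vertices, the coalition count satisfies c(G) ≥ d(G) − f, where d(G) is the domatic number of G. -/
open scoped Classical

section Proofs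

variable {V : Type} [Fintype V] {G : SimpleGraph V}

lemma domset_mono {A B : Finset V} (h : A ⊆ B) (hA : IsDomSet G A) : IsDomSet G B := by
  intro v hv
  obtain ⟨u, hu, hadj⟩ := hA v fun hvA => hv (h hvA)
  exact ⟨u, h hu, hadj⟩

lemma coalition_symm {A B : Finset V} (h : IsCoalition G A B) : IsCoalition G B A :=
  ⟨fun e => h.1 e.symm, h.2.2.1, h.2.1, by rw [Finset.union_comm]; exact h.2.2.2⟩

lemma domset_singleton_iff {v : V} : IsDomSet G {v} ↔ ∀ u, u ≠ v → G.Adj v u := by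
  constructor
  · intro h u hu
    obtain ⟨w, hw, hadj⟩ := h u (by simp [hu])
    rw [Finset.mem_singleton] at hw
    subst hw; exact hadj
  · intro h u hu
    rw [Finset.mem_singleton] at hu
    exact ⟨v, Finset.mem_singleton_self v, h u hu⟩

lemma mem_fullVertices_iff {v : V} : v ∈ fullVertices G ↔ IsDomSet G {v} := by
  rw [fullVertices, Finset.mem_filter, domset_singleton_iff]
  simp only [Finset.mem_univ, true_and]
  constructor
  · intro h u hu
    have hsub : G.neighborFinset v ⊆ Finset.univ.erase v := by
      intro u hu'
      rw [Finset.mem_erase]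
      exact ⟨((G.mem_neighborFinset v u).mp hu').ne', Finset.mem_univ u⟩
    have hcard : (Finset.univ.erase v).card = Fintype.card V - 1 := by
      rw [Finset.card_erase_of_mem (Finset.mem_univ v), Finset.card_univ]
    have heq : G.neighborFinset v = Finset.univ.erase v :=
      Finset.eq_of_subset_of_card_le hsub (by rw [hcard, ← h]; exact le_of_eq rfl)
    have hm : u ∈ G.neighborFinset v := by
      rw [heq, Finset.mem_erase]; exact ⟨hu, Finset.mem_univ u⟩
    exact (G.mem_neighborFinset v u).mp hm
  · intro h
    have heq : G.neighborFinset v = Finset.univ.erase v := by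
      ext u
      rw [Finset.mem_erase, G.mem_neighborFinset]
      constructor
      · intro h'; exact ⟨h'.ne', Finset.mem_univ u⟩
      · rintro ⟨h1, -⟩; exact h u h1
    show (G.neighborFinset v).card = Fintype.card V - 1
    rw [heq, Finset.card_erase_of_mem (Finset.mem_univ v), Finset.card_univ]

lemma card_le_domatic {P : Finset (Finset V)} (h1 : ∀ A ∈ P, A.Nonempty)
    (h2 : ∀ A ∈ P, ∀ B ∈ P, A ≠ B → Disjoint A B)
    (h3 : ∀ A ∈ P, IsDomSet G A) : P.card ≤ domaticNumber G := by
  have hbdd : BddAbove {k | ∃ P : Finset (Finset V),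
      (∀ A ∈ P, A.Nonempty) ∧
      (∀ A ∈ P, ∀ B ∈ P, A ≠ B → Disjoint A B) ∧
      (∀ v : V, ∃ A ∈ P, v ∈ A) ∧
      (∀ A ∈ P, IsDomSet G A) ∧ k = P.card} := by
    refine ⟨Fintype.card (Finset V), ?_⟩
    rintro k ⟨P, -, -, -, -, rfl⟩
    exact Finset.card_le_univ P
  rcases P.eq_empty_or_nonempty with rfl | ⟨A0, hA0⟩
  · exact Nat.zero_le _
  set L := Finset.univ \ P.biUnion id with hL
  set A2 := A0 ∪ L with hA2
  have hA2not : A2 ∉ P.erase A0 := by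
    intro h
    obtain ⟨hne, hmem⟩ := Finset.mem_erase.mp h
    obtain ⟨v, hv⟩ := h1 A0 hA0
    exact Finset.disjoint_left.mp (h2 A0 hA0 A2 hmem (Ne.symm hne)) hv
      (Finset.mem_union_left _ hv)
  set P2 := insert A2 (P.erase A0) with hP2
  have hcard : P2.card = P.card := by
    rw [hP2, Finset.card_insert_of_notMem hA2not, Finset.card_erase_of_mem hA0]
    have : 1 ≤ P.card := Finset.card_pos.mpr ⟨A0, hA0⟩
    omega
  have hLdisj : ∀ B ∈ P, Disjoint L B := by
    intro B hB
    exact Finset.sdiff_disjoint.mono_right (Finset.subset_biUnion_of_mem id hB)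
  have hmem2 : P2.card ∈ {k | ∃ P : Finset (Finset V),
      (∀ A ∈ P, A.Nonempty) ∧
      (∀ A ∈ P, ∀ B ∈ P, A ≠ B → Disjoint A B) ∧
      (∀ v : V, ∃ A ∈ P, v ∈ A) ∧
      (∀ A ∈ P, IsDomSet G A) ∧ k = P.card} := by
    refine ⟨P2, ?_, ?_, ?_, ?_, rfl⟩
    · intro A hA
      rcases Finset.mem_insert.mp hA with rfl | hA
      · exact (h1 A0 hA0).mono Finset.subset_union_left
      · exact h1 A (Finset.mem_of_mem_erase hA)
    · intro A hA B hB hne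
      rcases Finset.mem_insert.mp hA with rfl | hA <;>
        rcases Finset.mem_insert.mp hB with rfl | hB
      · exact absurd rfl hne
      · obtain ⟨hBne, hBP⟩ := Finset.mem_erase.mp hB
        exact Finset.disjoint_union_left.mpr
          ⟨h2 A0 hA0 B hBP (Ne.symm hBne), hLdisj B hBP⟩
      · obtain ⟨hAne, hAP⟩ := Finset.mem_erase.mp hA
        exact (Finset.disjoint_union_left.mpr
          ⟨h2 A0 hA0 A hAP (Ne.symm hAne), hLdisj A hAP⟩).symm
      · exact h2 A (Finset.mem_of_mem_erase hA) B (Finset.mem_of_mem_erase hB) hne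
    · intro v
      by_cases hv : v ∈ P.biUnion id
      · obtain ⟨B, hB, hvB⟩ := Finset.mem_biUnion.mp hv
        by_cases hBA : B = A0
        · subst hBA
          exact ⟨A2, Finset.mem_insert_self _ _, Finset.mem_union_left _ hvB⟩
        · exact ⟨B, Finset.mem_insert_of_mem (Finset.mem_erase.mpr ⟨hBA, hB⟩), hvB⟩
      · refine ⟨A2, Finset.mem_insert_self _ _, Finset.mem_union_right _ ?_⟩
        rw [hL, Finset.mem_sdiff]
        exact ⟨Finset.mem_univ v, hv⟩
    · intro A hA
      rcases Finset.mem_insert.mp hA with rfl | hA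
      · exact domset_mono Finset.subset_union_left (h3 A0 hA0)
      · exact h3 A (Finset.mem_of_mem_erase hA)
  have := le_csSup hbdd hmem2
  rw [hcard] at this
  exact this

end Proofs
section Proofs2

set_option linter.unusedSectionVars false

variable {V : Type} [Fintype V] {G : SimpleGraph V}

lemma Msub {P : Finset (Finset V)}
    (h1 : ∀ A ∈ P, A.Nonempty) (h2 : ∀ A ∈ P, ∀ B ∈ P, A ≠ B → Disjoint A B)
    (h3 : ∀ A ∈ P, IsDomSet G A) (hc : domaticNumber G ≤ P.card)
    {S : Finset V} (hS : S ∈ P) (D : Finset V) (hDS : D ⊆ S) (hDne : D.Nonempty)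
    (hD : IsDomSet G D) (hSDne : (S \ D).Nonempty) : ¬ IsDomSet G (S \ D) := by
  intro hSD
  obtain ⟨x, hx⟩ := hDne
  obtain ⟨y, hy⟩ := hSDne
  have hDneS : D ≠ S \ D := fun h => (Finset.mem_sdiff.mp (h ▸ hx)).2 hx
  have hD_not : D ∉ P.erase S := by
    intro h
    obtain ⟨hne, hmem⟩ := Finset.mem_erase.mp h
    exact Finset.disjoint_left.mp (h2 D hmem S hS hne) hx (hDS hx)
  have hSD_not : S \ D ∉ P.erase S := by
    intro h
    obtain ⟨hne, hmem⟩ := Finset.mem_erase.mp h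
    exact Finset.disjoint_left.mp (h2 _ hmem S hS hne) hy (Finset.mem_sdiff.mp hy).1
  have hD_not2 : D ∉ insert (S \ D) (P.erase S) := by
    simp only [Finset.mem_insert]
    rintro (h | h)
    exacts [hDneS h, hD_not h]
  set P2 := insert D (insert (S \ D) (P.erase S)) with hP2
  have hcard : P2.card = P.card + 1 := by
    rw [hP2, Finset.card_insert_of_notMem hD_not2, Finset.card_insert_of_notMem hSD_not,
      Finset.card_erase_of_mem hS]
    have : 1 ≤ P.card := Finset.card_pos.mpr ⟨S, hS⟩
    omega
  have hdd : Disjoint D (S \ D) :=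
    Finset.disjoint_left.mpr fun a ha hmem => (Finset.mem_sdiff.mp hmem).2 ha
  have key : ∀ A ∈ P2, A = D ∨ A = S \ D ∨ (A ∈ P ∧ A ≠ S) := by
    intro A hA
    rcases Finset.mem_insert.mp hA with rfl | hA
    · exact Or.inl rfl
    rcases Finset.mem_insert.mp hA with rfl | hA
    · exact Or.inr (Or.inl rfl)
    · obtain ⟨hne, hmem⟩ := Finset.mem_erase.mp hA
      exact Or.inr (Or.inr ⟨hmem, hne⟩)
  have hle : P2.card ≤ domaticNumber G := by
    apply card_le_domatic
    · intro A hA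
      rcases key A hA with rfl | rfl | ⟨hA, -⟩
      · exact ⟨x, hx⟩
      · exact ⟨y, hy⟩
      · exact h1 A hA
    · intro A hA B hB hne
      rcases key A hA with rfl | rfl | ⟨hA', hAS⟩ <;>
        rcases key B hB with rfl | rfl | ⟨hB', hBS⟩
      · exact absurd rfl hne
      · exact hdd
      · exact (h2 S hS B hB' (Ne.symm hBS)).mono_left hDS
      · exact hdd.symm
      · exact absurd rfl hne
      · exact (h2 S hS B hB' (Ne.symm hBS)).mono_left Finset.sdiff_subset
      · exact ((h2 S hS A hA' (Ne.symm hAS)).mono_left hDS).symm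
      · exact ((h2 S hS A hA' (Ne.symm hAS)).mono_left Finset.sdiff_subset).symm
      · exact h2 A hA' B hB' hne
    · intro A hA
      rcases key A hA with rfl | rfl | ⟨hA, -⟩
      · exact hD
      · exact hSD
      · exact h3 A hA
  omega

lemma exists_min_dom : ∀ (S : Finset V), IsDomSet G S →
    ∃ D, D ⊆ S ∧ IsDomSet G D ∧ ∀ x ∈ D, ¬ IsDomSet G (D.erase x) := by
  intro S
  induction S using Finset.strongInductionOn with
  | _ S ih =>
    intro hS
    by_cases h : ∃ x ∈ S, IsDomSet G (S.erase x)
    · obtain ⟨x, hx, hdom⟩ := h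
      obtain ⟨D, hD1, hD2, hD3⟩ := ih (S.erase x) (Finset.erase_ssubset hx) hdom
      exact ⟨D, hD1.trans (Finset.erase_subset x S), hD2, hD3⟩
    · push_neg at h
      exact ⟨S, Finset.Subset.refl S, hS, h⟩

lemma split_lemma {S : Finset V} (hSne : S.Nonempty) (hS : IsDomSet G S)
    (hff : ∀ v ∈ S, ¬ IsDomSet G {v})
    (hM : ∀ D ⊆ S, D.Nonempty → IsDomSet G D → (S \ D).Nonempty → ¬ IsDomSet G (S \ D)) :
    ∃ ps : Finset (Finset V), (∀ A ∈ ps, A.Nonempty) ∧ (∀ A ∈ ps, A ⊆ S) ∧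
      (∀ A ∈ ps, ∀ B ∈ ps, A ≠ B → Disjoint A B) ∧ (∀ v ∈ S, ∃ A ∈ ps, v ∈ A) ∧
      (∀ A ∈ ps, ∃ B ∈ ps, IsCoalition G A B) := by
  obtain ⟨D, hDsub, hD, hmin⟩ := exists_min_dom S hS
  have hDne : D.Nonempty := by
    rcases D.eq_empty_or_nonempty with rfl | h
    · obtain ⟨v, hv⟩ := hSne
      by_cases hvD : v ∈ (∅ : Finset V)
      · exact absurd hvD (Finset.notMem_empty v)
      · obtain ⟨u, hu, -⟩ := hD v hvD
        exact absurd hu (Finset.notMem_empty u)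
    · exact h
  obtain ⟨x, hx⟩ := hDne
  have hxS : x ∈ S := hDsub hx
  have hxnd : ¬ IsDomSet G {x} := hff x hxS
  have hDx : (D.erase x).Nonempty := by
    rcases (D.erase x).eq_empty_or_nonempty with he | h
    · rcases (Finset.erase_eq_empty_iff _ _).mp he with rfl | rfl
      · exact absurd hx (Finset.notMem_empty x)
      · exact absurd hD hxnd
    · exact h
  have hDxnd : ¬ IsDomSet G (D.erase x) := hmin x hx
  have hDeq : {x} ∪ D.erase x = D := by
    rw [← Finset.insert_eq, Finset.insert_erase hx]
  by_cases h1 : IsDomSet G ((S \ D) ∪ {x})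
  · by_cases h2 : IsDomSet G (S.erase x)
    · -- three pieces
      have hSD : (S \ D).Nonempty := by
        rcases (S \ D).eq_empty_or_nonempty with he | h
        · rw [he, Finset.empty_union] at h1
          exact absurd h1 hxnd
        · exact h
      have hSDnd : ¬ IsDomSet G (S \ D) := hM D hDsub ⟨x, hx⟩ hD hSD
      have hunion3 : D.erase x ∪ (S \ D) = S.erase x := by
        ext v
        simp only [Finset.mem_union, Finset.mem_erase, Finset.mem_sdiff]
        constructor
        · rintro (⟨hvx, hvD⟩ | ⟨hvS, hvD⟩)
          · exact ⟨hvx, hDsub hvD⟩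
          · exact ⟨fun h => hvD (h ▸ hx), hvS⟩
        · rintro ⟨hvx, hvS⟩
          by_cases h : v ∈ D
          · exact Or.inl ⟨hvx, h⟩
          · exact Or.inr ⟨hvS, h⟩
      have hne1 : ({x} : Finset V) ≠ D.erase x := by
        intro h
        have := Finset.mem_singleton_self x
        rw [h] at this
        exact (Finset.notMem_erase x D) this
      have hne2 : ({x} : Finset V) ≠ S \ D := by
        intro h
        have := Finset.mem_singleton_self x
        rw [h, Finset.mem_sdiff] at this
        exact this.2 hx
      have hne3 : D.erase x ≠ S \ D := by
        intro h
        obtain ⟨y, hy⟩ := hDx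
        have := hy
        rw [h, Finset.mem_sdiff] at this
        exact this.2 (Finset.mem_of_mem_erase hy)
      have co1 : IsCoalition G {x} (D.erase x) :=
        ⟨hne1, hxnd, hDxnd, by rw [hDeq]; exact hD⟩
      have co2 : IsCoalition G {x} (S \ D) :=
        ⟨hne2, hxnd, hSDnd, by rw [Finset.union_comm]; exact h1⟩
      have co3 : IsCoalition G (D.erase x) (S \ D) :=
        ⟨hne3, hDxnd, hSDnd, by rw [hunion3]; exact h2⟩
      have hmem : ∀ A, A ∈ ({{x}, D.erase x, S \ D} : Finset (Finset V)) ↔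
          A = {x} ∨ A = D.erase x ∨ A = S \ D := by
        intro A
        simp [Finset.mem_insert, Finset.mem_singleton]
      refine ⟨{{x}, D.erase x, S \ D}, ?_, ?_, ?_, ?_, ?_⟩
      · intro A hA
        rcases (hmem A).mp hA with rfl | rfl | rfl
        · exact ⟨x, Finset.mem_singleton_self x⟩
        · exact hDx
        · exact hSD
      · intro A hA
        rcases (hmem A).mp hA with rfl | rfl | rfl
        · exact Finset.singleton_subset_iff.mpr hxS
        · exact (Finset.erase_subset x D).trans hDsub
        · exact Finset.sdiff_subset
      · have d1 : Disjoint ({x} : Finset V) (D.erase x) :=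
          Finset.disjoint_left.mpr fun a ha hb => by
            rw [Finset.mem_singleton] at ha
            exact (Finset.notMem_erase x D) (ha ▸ hb)
        have d2 : Disjoint ({x} : Finset V) (S \ D) :=
          Finset.disjoint_left.mpr fun a ha hb => by
            rw [Finset.mem_singleton] at ha
            exact (Finset.mem_sdiff.mp hb).2 (ha ▸ hx)
        have d3 : Disjoint (D.erase x) (S \ D) :=
          Finset.disjoint_left.mpr fun a ha hb =>
            (Finset.mem_sdiff.mp hb).2 (Finset.mem_of_mem_erase ha)
        intro A hA B hB hne
        rcases (hmem A).mp hA with rfl | rfl | rfl <;>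
          rcases (hmem B).mp hB with rfl | rfl | rfl
        · exact absurd rfl hne
        · exact d1
        · exact d2
        · exact d1.symm
        · exact absurd rfl hne
        · exact d3
        · exact d2.symm
        · exact d3.symm
        · exact absurd rfl hne
      · intro v hv
        by_cases hvD : v ∈ D
        · by_cases hvx : v = x
          · exact ⟨{x}, (hmem _).mpr (Or.inl rfl), by simp [hvx]⟩
          · exact ⟨D.erase x, (hmem _).mpr (Or.inr (Or.inl rfl)),
              Finset.mem_erase.mpr ⟨hvx, hvD⟩⟩
        · exact ⟨S \ D, (hmem _).mpr (Or.inr (Or.inr rfl)),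
            Finset.mem_sdiff.mpr ⟨hv, hvD⟩⟩
      · intro A hA
        rcases (hmem A).mp hA with rfl | rfl | rfl
        · exact ⟨D.erase x, (hmem _).mpr (Or.inr (Or.inl rfl)), co1⟩
        · exact ⟨{x}, (hmem _).mpr (Or.inl rfl), coalition_symm co1⟩
        · exact ⟨{x}, (hmem _).mpr (Or.inl rfl), coalition_symm co2⟩
    · -- two pieces {x}, S.erase x
      have hSx : (S.erase x).Nonempty := by
        rcases (S.erase x).eq_empty_or_nonempty with he | h
        · rcases (Finset.erase_eq_empty_iff _ _).mp he with rfl | rfl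
          · exact absurd hxS (Finset.notMem_empty x)
          · exact absurd hS hxnd
        · exact h
      have hne1 : ({x} : Finset V) ≠ S.erase x := by
        intro h
        have := Finset.mem_singleton_self x
        rw [h] at this
        exact (Finset.notMem_erase x S) this
      have co : IsCoalition G ({x}) (S.erase x) :=
        ⟨hne1, hxnd, h2, by
          rw [← Finset.insert_eq, Finset.insert_erase hxS]; exact hS⟩
      have hmem : ∀ A, A ∈ ({{x}, S.erase x} : Finset (Finset V)) ↔
          A = {x} ∨ A = S.erase x := by
        intro A; simp [Finset.mem_insert, Finset.mem_singleton]
      refine ⟨{{x}, S.erase x}, ?_, ?_, ?_, ?_, ?_⟩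
      · intro A hA
        rcases (hmem A).mp hA with rfl | rfl
        · exact ⟨x, Finset.mem_singleton_self x⟩
        · exact hSx
      · intro A hA
        rcases (hmem A).mp hA with rfl | rfl
        · exact Finset.singleton_subset_iff.mpr hxS
        · exact Finset.erase_subset x S
      · have d1 : Disjoint ({x} : Finset V) (S.erase x) :=
          Finset.disjoint_left.mpr fun a ha hb => by
            rw [Finset.mem_singleton] at ha
            exact (Finset.notMem_erase x S) (ha ▸ hb)
        intro A hA B hB hne
        rcases (hmem A).mp hA with rfl | rfl <;> rcases (hmem B).mp hB with rfl | rfl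
        · exact absurd rfl hne
        · exact d1
        · exact d1.symm
        · exact absurd rfl hne
      · intro v hv
        by_cases hvx : v = x
        · exact ⟨{x}, (hmem _).mpr (Or.inl rfl), by simp [hvx]⟩
        · exact ⟨S.erase x, (hmem _).mpr (Or.inr rfl), Finset.mem_erase.mpr ⟨hvx, hv⟩⟩
      · intro A hA
        rcases (hmem A).mp hA with rfl | rfl
        · exact ⟨S.erase x, (hmem _).mpr (Or.inr rfl), co⟩
        · exact ⟨{x}, (hmem _).mpr (Or.inl rfl), coalition_symm co⟩
  · -- two pieces (S \ D) ∪ {x}, D.erase x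
    have hxA : x ∈ (S \ D) ∪ {x} := Finset.mem_union_right _ (Finset.mem_singleton_self x)
    have hne1 : (S \ D) ∪ {x} ≠ D.erase x := by
      intro h
      rw [h] at hxA
      exact (Finset.notMem_erase x D) hxA
    have hueq : ((S \ D) ∪ {x}) ∪ D.erase x = S := by
      ext v
      simp only [Finset.mem_union, Finset.mem_sdiff, Finset.mem_singleton, Finset.mem_erase]
      constructor
      · rintro ((⟨hvS, -⟩ | rfl) | ⟨-, hvD⟩)
        · exact hvS
        · exact hxS
        · exact hDsub hvD
      · intro hvS
        by_cases hvD : v ∈ D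
        · by_cases hvx : v = x
          · exact Or.inl (Or.inr hvx)
          · exact Or.inr ⟨hvx, hvD⟩
        · exact Or.inl (Or.inl ⟨hvS, hvD⟩)
    have co : IsCoalition G ((S \ D) ∪ {x}) (D.erase x) :=
      ⟨hne1, h1, hDxnd, by rw [hueq]; exact hS⟩
    have hmem : ∀ A, A ∈ ({(S \ D) ∪ {x}, D.erase x} : Finset (Finset V)) ↔
        A = (S \ D) ∪ {x} ∨ A = D.erase x := by
      intro A; simp [Finset.mem_insert, Finset.mem_singleton]
    refine ⟨{(S \ D) ∪ {x}, D.erase x}, ?_, ?_, ?_, ?_, ?_⟩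
    · intro A hA
      rcases (hmem A).mp hA with rfl | rfl
      · exact ⟨x, hxA⟩
      · exact hDx
    · intro A hA
      rcases (hmem A).mp hA with rfl | rfl
      · exact Finset.union_subset Finset.sdiff_subset (Finset.singleton_subset_iff.mpr hxS)
      · exact (Finset.erase_subset x D).trans hDsub
    · have d1 : Disjoint ((S \ D) ∪ {x}) (D.erase x) :=
        Finset.disjoint_left.mpr fun a ha hb => by
          rcases Finset.mem_union.mp ha with h | h
          · exact (Finset.mem_sdiff.mp h).2 (Finset.mem_of_mem_erase hb)
          · rw [Finset.mem_singleton] at h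
            exact (Finset.notMem_erase x D) (h ▸ hb)
      intro A hA B hB hne
      rcases (hmem A).mp hA with rfl | rfl <;> rcases (hmem B).mp hB with rfl | rfl
      · exact absurd rfl hne
      · exact d1
      · exact d1.symm
      · exact absurd rfl hne
    · intro v hv
      by_cases hvD : v ∈ D
      · by_cases hvx : v = x
        · exact ⟨(S \ D) ∪ {x}, (hmem _).mpr (Or.inl rfl),
            Finset.mem_union_right _ (by simp [hvx])⟩
        · exact ⟨D.erase x, (hmem _).mpr (Or.inr rfl), Finset.mem_erase.mpr ⟨hvx, hvD⟩⟩
      · exact ⟨(S \ D) ∪ {x}, (hmem _).mpr (Or.inl rfl),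
          Finset.mem_union_left _ (Finset.mem_sdiff.mpr ⟨hv, hvD⟩)⟩
    · intro A hA
      rcases (hmem A).mp hA with rfl | rfl
      · exact ⟨D.erase x, (hmem _).mpr (Or.inr rfl), co⟩
      · exact ⟨(S \ D) ∪ {x}, (hmem _).mpr (Or.inl rfl), coalition_symm co⟩

end Proofs2
/-- For any graph `G` with no isolated vertices and exactly `f` full vertices,
`c(G) ≥ d(G) - f`. -/
theorem stmt_4 {V : Type} [Fintype V] (G : SimpleGraph V) (f : ℕ)
    (hiso : ∀ v : V, ∃ u, G.Adj v u)
    (hf : (fullVertices G).card = f) :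
    domaticNumber G - f ≤ coalitionCount G := by
  by_cases hdf : domaticNumber G ≤ f
  · rw [Nat.sub_eq_zero_of_le hdf]
    exact Nat.zero_le _
  push_neg at hdf
  -- attain the domatic number
  have hbdd : BddAbove {k | ∃ P : Finset (Finset V),
      (∀ A ∈ P, A.Nonempty) ∧
      (∀ A ∈ P, ∀ B ∈ P, A ≠ B → Disjoint A B) ∧
      (∀ v : V, ∃ A ∈ P, v ∈ A) ∧
      (∀ A ∈ P, IsDomSet G A) ∧ k = P.card} := by
    refine ⟨Fintype.card (Finset V), ?_⟩
    rintro k ⟨P, -, -, -, -, rfl⟩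
    exact Finset.card_le_univ P
  have hne0 : Set.Nonempty {k | ∃ P : Finset (Finset V),
      (∀ A ∈ P, A.Nonempty) ∧
      (∀ A ∈ P, ∀ B ∈ P, A ≠ B → Disjoint A B) ∧
      (∀ v : V, ∃ A ∈ P, v ∈ A) ∧
      (∀ A ∈ P, IsDomSet G A) ∧ k = P.card} := by
    refine ⟨_, Finset.univ.image (fun _ : V => (Finset.univ : Finset V)), ?_, ?_, ?_, ?_, rfl⟩
    · intro A hA
      obtain ⟨v, -, rfl⟩ := Finset.mem_image.mp hA
      exact ⟨v, Finset.mem_univ v⟩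
    · intro A hA B hB hne
      obtain ⟨v, -, rfl⟩ := Finset.mem_image.mp hA
      obtain ⟨w, -, rfl⟩ := Finset.mem_image.mp hB
      exact absurd rfl hne
    · intro v
      exact ⟨Finset.univ, Finset.mem_image.mpr ⟨v, Finset.mem_univ v, rfl⟩, Finset.mem_univ v⟩
    · intro A hA v hv
      obtain ⟨w, -, rfl⟩ := Finset.mem_image.mp hA
      exact absurd (Finset.mem_univ v) hv
  have hmem : domaticNumber G ∈ {k | ∃ P : Finset (Finset V),
      (∀ A ∈ P, A.Nonempty) ∧
      (∀ A ∈ P, ∀ B ∈ P, A ≠ B → Disjoint A B) ∧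
      (∀ v : V, ∃ A ∈ P, v ∈ A) ∧
      (∀ A ∈ P, IsDomSet G A) ∧ k = P.card} := Nat.sSup_mem hne0 hbdd
  obtain ⟨Q, hQ1, hQ2, hQ3, hQ4, hQcard⟩ := hmem
  set FV := fullVertices G with hFVdef
  -- each part of Q contains at most one full vertex
  have hMQ : ∀ S ∈ Q, ∀ D ⊆ S, D.Nonempty → IsDomSet G D →
      (S \ D).Nonempty → ¬ IsDomSet G (S \ D) :=
    fun S hS => Msub hQ1 hQ2 hQ4 hQcard.le hS
  have hcap : ∀ S ∈ Q, ∀ a ∈ S ∩ FV, ∀ b ∈ S ∩ FV, a = b := by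
    intro S hS a ha b hb
    by_contra hab
    obtain ⟨haS, haF⟩ := Finset.mem_inter.mp ha
    obtain ⟨hbS, hbF⟩ := Finset.mem_inter.mp hb
    have h1 : IsDomSet G {a} := mem_fullVertices_iff.mp haF
    have h2 : IsDomSet G {b} := mem_fullVertices_iff.mp hbF
    have hbmem : b ∈ S \ {a} := Finset.mem_sdiff.mpr ⟨hbS, by
      rw [Finset.mem_singleton]; exact fun h => hab h.symm⟩
    exact hMQ S hS {a} (Finset.singleton_subset_iff.mpr haS) ⟨a, Finset.mem_singleton_self a⟩
      h1 ⟨b, hbmem⟩ (domset_mono (Finset.singleton_subset_iff.mpr hbmem) h2)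
  set F := Q.filter (fun S => (S ∩ FV).Nonempty) with hFdef
  set N := Q.filter (fun S => ¬ (S ∩ FV).Nonempty) with hNdef
  have hFV_eq : FV = Q.biUnion (fun S => S ∩ FV) := by
    ext v
    rw [Finset.mem_biUnion]
    constructor
    · intro hv
      obtain ⟨S, hS, hvS⟩ := hQ3 v
      exact ⟨S, hS, Finset.mem_inter.mpr ⟨hvS, hv⟩⟩
    · rintro ⟨S, -, hv⟩
      exact (Finset.mem_inter.mp hv).2
  have hFVcard : FV.card = ∑ S ∈ Q, (S ∩ FV).card := by
    conv_lhs => rw [hFV_eq]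
    exact Finset.card_biUnion (fun S hS S' hS' hne =>
      ((hQ2 S hS S' hS' hne).mono Finset.inter_subset_left Finset.inter_subset_left))
  have hFone : ∀ S ∈ F, (S ∩ FV).card = 1 := by
    intro S hS
    obtain ⟨hSQ, hSne⟩ := Finset.mem_filter.mp hS
    exact le_antisymm (Finset.card_le_one.mpr (hcap S hSQ)) hSne.card_pos
  have hNzero : ∀ S ∈ N, (S ∩ FV).card = 0 := by
    intro S hS
    obtain ⟨-, h⟩ := Finset.mem_filter.mp hS
    rw [Finset.not_nonempty_iff_eq_empty.mp h]
    exact Finset.card_empty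
  have hfF : f = F.card := by
    rw [← hf]
    calc FV.card = ∑ S ∈ Q, (S ∩ FV).card := hFVcard
      _ = ∑ S ∈ F, (S ∩ FV).card + ∑ S ∈ N, (S ∩ FV).card :=
        (Finset.sum_filter_add_sum_filter_not Q _ _).symm
      _ = F.card := by
        rw [Finset.sum_congr rfl hFone, Finset.sum_congr rfl hNzero]
        simp
  have hFN : F.card + N.card = Q.card := Finset.card_filter_add_card_filter_not _
  have hNcard : N.card = domaticNumber G - f := by omega
  have hNne : N.Nonempty := Finset.card_pos.mp (by omega)
  obtain ⟨V1, hV1N⟩ := hNne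
  have hV1Q : V1 ∈ Q := (Finset.mem_filter.mp hV1N).1
  have hV1F : V1 ∩ FV = ∅ :=
    Finset.not_nonempty_iff_eq_empty.mp (Finset.mem_filter.mp hV1N).2
  set N' := N.erase V1 with hN'def
  have hN'Q : ∀ S ∈ N', S ∈ Q := fun S hS => (Finset.mem_filter.mp (Finset.mem_of_mem_erase hS)).1
  set W := Finset.univ \ (FV ∪ N'.biUnion id) with hWdef
  have hV1W : V1 ⊆ W := by
    intro v hv
    rw [hWdef, Finset.mem_sdiff, Finset.mem_union]
    refine ⟨Finset.mem_univ v, ?_⟩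
    rintro (hvF | hvB)
    · exact Finset.notMem_empty v (hV1F ▸ Finset.mem_inter.mpr ⟨hv, hvF⟩)
    · obtain ⟨S, hS, hvS⟩ := Finset.mem_biUnion.mp hvB
      have hne : V1 ≠ S := fun h => (Finset.mem_erase.mp hS).1 h.symm
      exact Finset.disjoint_left.mp (hQ2 V1 hV1Q S (hN'Q S hS) hne) hv hvS
  have hWdom : IsDomSet G W := domset_mono hV1W (hQ4 V1 hV1Q)
  have hWne : W.Nonempty := (hQ1 V1 hV1Q).mono hV1W
  have hWF : W ∩ FV = ∅ := by
    rw [Finset.eq_empty_iff_forall_notMem]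
    intro v hv
    obtain ⟨hvW, hvF⟩ := Finset.mem_inter.mp hv
    rw [hWdef, Finset.mem_sdiff, Finset.mem_union] at hvW
    exact hvW.2 (Or.inl hvF)
  set FF := insert W N' with hFFdef
  have hWnotN' : W ∉ N' := by
    intro h
    obtain ⟨v, hv⟩ := hWne
    have hvB : v ∈ N'.biUnion id := Finset.mem_biUnion.mpr ⟨W, h, hv⟩
    rw [hWdef, Finset.mem_sdiff, Finset.mem_union] at hv
    exact hv.2 (Or.inr hvB)
  have hFFcard : FF.card = domaticNumber G - f := by
    rw [hFFdef, Finset.card_insert_of_notMem hWnotN', hN'def,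
      Finset.card_erase_of_mem hV1N]
    have : 1 ≤ N.card := Finset.card_pos.mpr ⟨V1, hV1N⟩
    omega
  have hFFprops : ∀ S ∈ FF, S.Nonempty ∧ IsDomSet G S ∧ S ∩ FV = ∅ := by
    intro S hS
    rcases Finset.mem_insert.mp hS with rfl | hS
    · exact ⟨hWne, hWdom, hWF⟩
    · have hSQ := hN'Q S hS
      exact ⟨hQ1 S hSQ, hQ4 S hSQ,
        Finset.not_nonempty_iff_eq_empty.mp (Finset.mem_filter.mp (Finset.mem_of_mem_erase hS)).2⟩
  have hFFpd : ∀ S ∈ FF, ∀ T ∈ FF, S ≠ T → Disjoint S T := by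
    have hWd : ∀ T ∈ N', Disjoint W T := by
      intro T hT
      refine Finset.sdiff_disjoint.mono_right ?_
      exact (Finset.subset_biUnion_of_mem id hT).trans Finset.subset_union_right
    intro S hS T hT hne
    rcases Finset.mem_insert.mp hS with rfl | hS <;> rcases Finset.mem_insert.mp hT with rfl | hT
    · exact absurd rfl hne
    · exact hWd T hT
    · exact (hWd S hS).symm
    · exact hQ2 S (hN'Q S hS) T (hN'Q T hT) hne
  -- the cleaned maximum domatic family P'
  set Psing := FV.image (fun v => ({v} : Finset V)) with hPsingdef
  have hPsing_mem : ∀ A ∈ Psing, ∃ v ∈ FV, A = {v} := by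
    intro A hA
    obtain ⟨v, hv, rfl⟩ := Finset.mem_image.mp hA
    exact ⟨v, hv, rfl⟩
  set P' := Psing ∪ FF with hP'def
  have hP'1 : ∀ A ∈ P', A.Nonempty := by
    intro A hA
    rcases Finset.mem_union.mp hA with hA | hA
    · obtain ⟨v, -, rfl⟩ := hPsing_mem A hA
      exact ⟨v, Finset.mem_singleton_self v⟩
    · exact (hFFprops A hA).1
  have hsingFF : ∀ v ∈ FV, ∀ S ∈ FF, Disjoint ({v} : Finset V) S := by
    intro v hv S hS
    refine Finset.disjoint_left.mpr ?_
    intro a ha haS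
    rw [Finset.mem_singleton] at ha
    subst ha
    exact Finset.notMem_empty a ((hFFprops S hS).2.2 ▸ Finset.mem_inter.mpr ⟨haS, hv⟩)
  have hP'2 : ∀ A ∈ P', ∀ B ∈ P', A ≠ B → Disjoint A B := by
    intro A hA B hB hne
    rcases Finset.mem_union.mp hA with hA | hA <;> rcases Finset.mem_union.mp hB with hB | hB
    · obtain ⟨v, -, rfl⟩ := hPsing_mem A hA
      obtain ⟨w, -, rfl⟩ := hPsing_mem B hB
      have : v ≠ w := fun h => hne (h ▸ rfl)
      simp [Finset.disjoint_left, this]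
    · obtain ⟨v, hv, rfl⟩ := hPsing_mem A hA
      exact hsingFF v hv B hB
    · obtain ⟨w, hw, rfl⟩ := hPsing_mem B hB
      exact (hsingFF w hw A hA).symm
    · exact hFFpd A hA B hB hne
  have hP'3 : ∀ A ∈ P', IsDomSet G A := by
    intro A hA
    rcases Finset.mem_union.mp hA with hA | hA
    · obtain ⟨v, hv, rfl⟩ := hPsing_mem A hA
      exact mem_fullVertices_iff.mp hv
    · exact (hFFprops A hA).2.1
  have hP'card : P'.card = domaticNumber G := by
    have hdisj : Disjoint Psing FF := by
      rw [Finset.disjoint_left]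
      intro A hA hA'
      obtain ⟨v, hv, rfl⟩ := hPsing_mem A hA
      exact Finset.notMem_empty v
        ((hFFprops _ hA').2.2 ▸ Finset.mem_inter.mpr ⟨Finset.mem_singleton_self v, hv⟩)
    rw [hP'def, Finset.card_union_of_disjoint hdisj, hFFcard, hPsingdef,
      Finset.card_image_of_injective _ Finset.singleton_injective, hf]
    omega
  have hMP' : ∀ S ∈ P', ∀ D ⊆ S, D.Nonempty → IsDomSet G D →
      (S \ D).Nonempty → ¬ IsDomSet G (S \ D) :=
    fun S hS => Msub hP'1 hP'2 hP'3 hP'card.ge hS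
  -- split every full-free part
  have hsplit : ∀ S : Finset V, ∃ ps : Finset (Finset V),
      S ∈ FF → (∀ A ∈ ps, A.Nonempty) ∧ (∀ A ∈ ps, A ⊆ S) ∧
      (∀ A ∈ ps, ∀ B ∈ ps, A ≠ B → Disjoint A B) ∧ (∀ v ∈ S, ∃ A ∈ ps, v ∈ A) ∧
      (∀ A ∈ ps, ∃ B ∈ ps, IsCoalition G A B) := by
    intro S
    by_cases hS : S ∈ FF
    · obtain ⟨hne, hdom, hcapS⟩ := hFFprops S hS
      have hffS : ∀ v ∈ S, ¬ IsDomSet G {v} := by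
        intro v hv hd
        exact Finset.notMem_empty v
          (hcapS ▸ Finset.mem_inter.mpr ⟨hv, mem_fullVertices_iff.mpr hd⟩)
      obtain ⟨ps, h⟩ := split_lemma hne hdom hffS
        (hMP' S (Finset.mem_union_right _ hS))
      exact ⟨ps, fun _ => h⟩
    · exact ⟨∅, fun h => absurd h hS⟩
  choose pcs hpcs using hsplit
  set π := Psing ∪ FF.biUnion pcs with hπdef
  have hpcsπ : ∀ S ∈ FF, ∀ A ∈ pcs S, A ∈ π :=
    fun S hS A hA => Finset.mem_union_right _ (Finset.mem_biUnion.mpr ⟨S, hS, hA⟩)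
  have hCP : IsCPartition G π := by
    refine ⟨?_, ?_, ?_, ?_⟩
    · intro A hA
      rcases Finset.mem_union.mp hA with hA | hA
      · obtain ⟨v, -, rfl⟩ := hPsing_mem A hA
        exact ⟨v, Finset.mem_singleton_self v⟩
      · obtain ⟨S, hS, hA⟩ := Finset.mem_biUnion.mp hA
        exact (hpcs S hS).1 A hA
    · intro A hA B hB hne
      rcases Finset.mem_union.mp hA with hA | hA <;> rcases Finset.mem_union.mp hB with hB | hB
      · obtain ⟨v, -, rfl⟩ := hPsing_mem A hA
        obtain ⟨w, -, rfl⟩ := hPsing_mem B hB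
        have : v ≠ w := fun h => hne (h ▸ rfl)
        simp [Finset.disjoint_left, this]
      · obtain ⟨v, hv, rfl⟩ := hPsing_mem A hA
        obtain ⟨S, hS, hB'⟩ := Finset.mem_biUnion.mp hB
        exact (hsingFF v hv S hS).mono_right ((hpcs S hS).2.1 B hB')
      · obtain ⟨w, hw, rfl⟩ := hPsing_mem B hB
        obtain ⟨S, hS, hA'⟩ := Finset.mem_biUnion.mp hA
        exact ((hsingFF w hw S hS).mono_right ((hpcs S hS).2.1 A hA')).symm
      · obtain ⟨S, hS, hA'⟩ := Finset.mem_biUnion.mp hA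
        obtain ⟨T, hT, hB'⟩ := Finset.mem_biUnion.mp hB
        by_cases hST : S = T
        · subst hST
          exact (hpcs S hS).2.2.1 A hA' B hB' hne
        · exact (hFFpd S hS T hT hST).mono ((hpcs S hS).2.1 A hA')
            ((hpcs T hT).2.1 B hB')
    · intro v
      by_cases hv : v ∈ FV
      · exact ⟨{v}, Finset.mem_union_left _ (Finset.mem_image.mpr ⟨v, hv, rfl⟩),
          Finset.mem_singleton_self v⟩
      · have : ∃ S ∈ FF, v ∈ S := by
          by_cases hvB : v ∈ N'.biUnion id
          · obtain ⟨S, hS, hvS⟩ := Finset.mem_biUnion.mp hvB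
            exact ⟨S, Finset.mem_insert_of_mem hS, hvS⟩
          · refine ⟨W, Finset.mem_insert_self _ _, ?_⟩
            rw [hWdef, Finset.mem_sdiff, Finset.mem_union]
            exact ⟨Finset.mem_univ v, fun h => h.elim hv hvB⟩
        obtain ⟨S, hS, hvS⟩ := this
        obtain ⟨A, hA, hvA⟩ := (hpcs S hS).2.2.2.1 v hvS
        exact ⟨A, hpcsπ S hS A hA, hvA⟩
    · intro A hA
      rcases Finset.mem_union.mp hA with hA | hA
      · obtain ⟨v, hv, rfl⟩ := hPsing_mem A hA
        exact Or.inl ⟨v, rfl, mem_fullVertices_iff.mp hv⟩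
      · obtain ⟨S, hS, hA'⟩ := Finset.mem_biUnion.mp hA
        obtain ⟨B, hB, hco⟩ := (hpcs S hS).2.2.2.2 A hA'
        exact Or.inr ⟨B, hpcsπ S hS B hB, hco⟩
  -- choose one coalition pair per full-free part
  have hgp0 : ∀ S : Finset V, ∃ p : Finset V × Finset V,
      S ∈ FF → p.1 ∈ pcs S ∧ p.2 ∈ pcs S ∧ IsCoalition G p.1 p.2 := by
    intro S
    by_cases hS : S ∈ FF
    · obtain ⟨v, hv⟩ := (hFFprops S hS).1
      obtain ⟨A, hA, -⟩ := (hpcs S hS).2.2.2.1 v hv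
      obtain ⟨B, hB, hco⟩ := (hpcs S hS).2.2.2.2 A hA
      exact ⟨(A, B), fun _ => ⟨hA, hB, hco⟩⟩
    · exact ⟨(∅, ∅), fun h => absurd h hS⟩
  choose gp hgp using hgp0
  set T := FF.biUnion (fun S => ({gp S, ((gp S).2, (gp S).1)} :
    Finset (Finset V × Finset V))) with hTdef
  have hfst : ∀ S ∈ FF, ∀ p ∈ ({gp S, ((gp S).2, (gp S).1)} :
      Finset (Finset V × Finset V)), p.1 ∈ pcs S ∧ p.2 ∈ pcs S := by
    intro S hS p hp
    rcases Finset.mem_insert.mp hp with rfl | hp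
    · exact ⟨(hgp S hS).1, (hgp S hS).2.1⟩
    · rw [Finset.mem_singleton] at hp
      subst hp
      exact ⟨(hgp S hS).2.1, (hgp S hS).1⟩
  have hTcard : T.card = 2 * FF.card := by
    have hdisj : ∀ S ∈ FF, ∀ S' ∈ FF, S ≠ S' → Disjoint
        ({gp S, ((gp S).2, (gp S).1)} : Finset (Finset V × Finset V))
        ({gp S', ((gp S').2, (gp S').1)} : Finset (Finset V × Finset V)) := by
      intro S hS S' hS' hne
      rw [Finset.disjoint_left]
      intro p hp hp'
      have h1 := (hfst S hS p hp).1
      have h2 := (hfst S' hS' p hp').1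
      obtain ⟨a, ha⟩ := (hpcs S hS).1 p.1 h1
      exact Finset.disjoint_left.mp (hFFpd S hS S' hS' hne)
        ((hpcs S hS).2.1 p.1 h1 ha) ((hpcs S' hS').2.1 p.1 h2 ha)
    rw [hTdef, Finset.card_biUnion hdisj]
    have hpair : ∀ S ∈ FF, ({gp S, ((gp S).2, (gp S).1)} :
        Finset (Finset V × Finset V)).card = 2 := by
      intro S hS
      have hne := (hgp S hS).2.2.1
      rw [Finset.card_insert_of_notMem, Finset.card_singleton]
      rw [Finset.mem_singleton]
      intro h
      exact hne (congrArg Prod.fst h)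
    rw [Finset.sum_congr rfl hpair, Finset.sum_const, smul_eq_mul, mul_comm]
  have hTsub : T ⊆ (π ×ˢ π).filter (fun p => IsCoalition G p.1 p.2) := by
    intro p hp
    obtain ⟨S, hS, hp'⟩ := Finset.mem_biUnion.mp hp
    obtain ⟨hp1, hp2⟩ := hfst S hS p hp'
    refine Finset.mem_filter.mpr ⟨Finset.mem_product.mpr
      ⟨hpcsπ S hS p.1 hp1, hpcsπ S hS p.2 hp2⟩, ?_⟩
    rcases Finset.mem_insert.mp hp' with rfl | hp'
    · exact (hgp S hS).2.2
    · rw [Finset.mem_singleton] at hp'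
      subst hp'
      exact coalition_symm (hgp S hS).2.2
  have hcount : domaticNumber G - f ≤ cpCount G π := by
    have h2 : 2 * (domaticNumber G - f) ≤
        ((π ×ˢ π).filter (fun p => IsCoalition G p.1 p.2)).card := by
      calc 2 * (domaticNumber G - f) = T.card := by rw [hTcard, hFFcard]
        _ ≤ _ := Finset.card_le_card hTsub
    show domaticNumber G - f ≤ ((π ×ˢ π).filter (fun p => IsCoalition G p.1 p.2)).card / 2
    omega
  have hbddc : BddAbove {k | ∃ π, IsCPartition G π ∧ k = cpCount G π} := by
    refine ⟨Fintype.card (Finset V × Finset V), ?_⟩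
    rintro k ⟨ρ, -, rfl⟩
    calc cpCount G ρ ≤ ((ρ ×ˢ ρ).filter (fun p => IsCoalition G p.1 p.2)).card :=
        Nat.div_le_self _ 2
      _ ≤ (ρ ×ˢ ρ).card := Finset.card_filter_le _ _
      _ ≤ Fintype.card (Finset V × Finset V) := Finset.card_le_univ _
  have hfin : cpCount G π ≤ coalitionCount G := le_csSup hbddc ⟨π, hCP, rfl⟩
  omega
end

section
/- Let G be a finite simple graph with exactly one full vertex and with minimum degree δ(G) = 1. If the coalition number C(G) equals s with s ≥ 2, then the coalition count satisfies c(G) = s − 2. -/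
open scoped Classical

lemma coal_symm {V : Type*} {G : SimpleGraph V} {A B : Finset V} (h : IsCoalition G A B) :
    IsCoalition G B A :=
  ⟨fun e => h.1 e.symm, h.2.2.1, h.2.1, by rw [Finset.union_comm]; exact h.2.2.2⟩

lemma key {V : Type} [Fintype V] (G : SimpleGraph V) (v u : V)
    (hv : ∀ w, w ≠ v → G.Adj v w)
    (hu : ∀ w, G.Adj w u → w = v)
    (hvu : v ≠ u)
    (hud : ¬ IsDomSet G {u})
    (π : Finset (Finset V)) (hπ : IsCPartition G π) :
    cpCount G π = π.card - 2 := by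
  obtain ⟨hne, hdisj, hcov, hcond⟩ := hπ
  obtain ⟨Av, hAvπ, hvAv⟩ := hcov v
  obtain ⟨Au, hAuπ, huAu⟩ := hcov u
  -- uniqueness of the set containing a given vertex
  have uniq : ∀ A ∈ π, ∀ B ∈ π, ∀ x, x ∈ A → x ∈ B → A = B := by
    intro A hA B hB x hxA hxB
    by_contra hAB
    exact Finset.disjoint_left.1 (hdisj A hA B hB hAB) hxA hxB
  have domAv : IsDomSet G Av := by
    intro w hw
    exact ⟨v, hvAv, hv w (by rintro rfl; exact hw hvAv)⟩
  have hAv : Av = {v} := by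
    rcases hcond Av hAvπ with ⟨x, hx, -⟩ | ⟨B, -, hcoal⟩
    · subst hx; simp_all
    · exact absurd domAv hcoal.2.1
  have hAund : ¬ IsDomSet G Au := by
    intro h
    rcases hcond Au hAuπ with ⟨x, hx, hxd⟩ | ⟨B, -, hcoal⟩
    · subst hx
      have hx2 : u = x := by simpa using huAu
      subst hx2; exact hud hxd
    · exact hcoal.2.1 h
  have hAvAu : Av ≠ Au := by
    intro h
    have : u ∈ ({v} : Finset V) := by rw [← hAv, h]; exact huAu
    simp at this; exact hvu this.symm
  have dom_mem : ∀ S : Finset V, IsDomSet G S → v ∈ S ∨ u ∈ S := by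
    intro S hS
    by_cases hvS : v ∈ S
    · exact Or.inl hvS
    by_cases huS : u ∈ S
    · exact Or.inr huS
    obtain ⟨w, hwS, hadj⟩ := hS u huS
    exact absurd ((hu w hadj) ▸ hwS) hvS
  have coal_struct : ∀ A ∈ π, ∀ B ∈ π, IsCoalition G A B →
      (A = Au ∨ B = Au) ∧ A ≠ Av ∧ B ≠ Av := by
    intro A hA B hB hc
    have hAAv : A ≠ Av := by rintro rfl; exact hc.2.1 domAv
    have hBAv : B ≠ Av := by rintro rfl; exact hc.2.2.1 domAv
    refine ⟨?_, hAAv, hBAv⟩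
    rcases dom_mem _ hc.2.2.2 with h | h
    · rcases Finset.mem_union.1 h with h | h
      · exact absurd (uniq A hA Av hAvπ v h hvAv) hAAv
      · exact absurd (uniq B hB Av hAvπ v h hvAv) hBAv
    · rcases Finset.mem_union.1 h with h | h
      · exact Or.inl (uniq A hA Au hAuπ u h huAu)
      · exact Or.inr (uniq B hB Au hAuπ u h huAu)
  have every_coal : ∀ B ∈ π, B ≠ Av → B ≠ Au → IsCoalition G B Au := by
    intro B hB hBv hBu
    rcases hcond B hB with ⟨x, hx, hxd⟩ | ⟨C, hC, hcoal⟩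
    · rcases dom_mem _ hxd with h | h
      · exact absurd (uniq B hB Av hAvπ v (hx ▸ h) hvAv) hBv
      · exact absurd (uniq B hB Au hAuπ u (hx ▸ h) huAu) hBu
    · rcases (coal_struct B hB C hC hcoal).1 with h | h
      · exact absurd h hBu
      · exact h ▸ hcoal
  -- the filter set
  set S := (π.erase Av).erase Au with hS
  have hAuS : Au ∉ S := by simp [hS]
  have hSsub : S ⊆ π := (Finset.erase_subset _ _).trans (Finset.erase_subset _ _)
  have hfilter : (π ×ˢ π).filter (fun p => IsCoalition G p.1 p.2)
      = S.image (fun B => (Au, B)) ∪ S.image (fun B => (B, Au)) := by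
    ext ⟨A, B⟩
    simp only [Finset.mem_filter, Finset.mem_product, Finset.mem_union, Finset.mem_image,
      Finset.mem_erase, hS, Prod.mk.injEq]
    constructor
    · rintro ⟨⟨hA, hB⟩, hc⟩
      obtain ⟨h1, h2, h3⟩ := coal_struct A hA B hB hc
      rcases h1 with rfl | rfl
      · exact Or.inl ⟨B, ⟨fun e => hc.1 e.symm, h3, hB⟩, rfl, rfl⟩
      · exact Or.inr ⟨A, ⟨hc.1, h2, hA⟩, rfl, rfl⟩
    · rintro (⟨C, ⟨hCu, hCv, hC⟩, rfl, rfl⟩ | ⟨C, ⟨hCu, hCv, hC⟩, rfl, rfl⟩)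
      · exact ⟨⟨hAuπ, hC⟩, coal_symm (every_coal C hC hCv hCu)⟩
      · exact ⟨⟨hC, hAuπ⟩, every_coal C hC hCv hCu⟩
  have hdisj2 : Disjoint (S.image (fun B => (Au, B))) (S.image (fun B => (B, Au))) := by
    rw [Finset.disjoint_left]
    rintro ⟨A, B⟩ h1 h2
    simp only [Finset.mem_image, Prod.mk.injEq] at h1 h2
    obtain ⟨C, hC, rfl, rfl⟩ := h1
    obtain ⟨D, hD, rfl, -⟩ := h2
    exact hAuS hD
  have hcard1 : (S.image (fun B => (Au, B))).card = S.card :=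
    Finset.card_image_of_injective _ (fun a b h => by simpa using h)
  have hcard2 : (S.image (fun B => (B, Au))).card = S.card :=
    Finset.card_image_of_injective _ (fun a b h => by simpa using h)
  have hScard : S.card = π.card - 2 := by
    rw [hS, Finset.card_erase_of_mem, Finset.card_erase_of_mem hAvπ]
    · omega
    · exact Finset.mem_erase.2 ⟨fun h => hAvAu h.symm, hAuπ⟩
  unfold cpCount
  rw [hfilter, Finset.card_union_of_disjoint hdisj2, hcard1, hcard2, hScard]
  omega


/-- If `G` has exactly one full vertex, `δ(G) = 1`, and `C(G) = s ≥ 2`,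
then `c(G) = s - 2`. -/
theorem stmt_7 {V : Type} [Fintype V] (G : SimpleGraph V) (s : ℕ)
    (hfull : (fullVertices G).card = 1)
    (hdelta : G.minDegree = 1)
    (hs : 2 ≤ s) (hC : coalitionNumber G = s) :
    coalitionCount G = s - 2 := by
  -- extract the unique full vertex
  obtain ⟨v, hv1⟩ := Finset.card_eq_one.1 hfull
  have hvdeg : G.degree v = Fintype.card V - 1 := by
    have : v ∈ fullVertices G := by rw [hv1]; exact Finset.mem_singleton_self v
    simpa [fullVertices] using this
  have hfulluniq : ∀ w, G.degree w = Fintype.card V - 1 → w = v := by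
    intro w hw
    have : w ∈ fullVertices G := by
      simp only [fullVertices, Finset.mem_filter, Finset.mem_univ, true_and]; exact hw
    rwa [hv1, Finset.mem_singleton] at this
  haveI : Nonempty V := ⟨v⟩
  -- v is adjacent to all others
  have hnb : G.neighborFinset v = Finset.univ.erase v := by
    apply Finset.eq_of_subset_of_card_le
    · intro w hw
      simp only [SimpleGraph.mem_neighborFinset] at hw
      exact Finset.mem_erase.2 ⟨fun e => G.loopless.irrefl v (e ▸ hw), Finset.mem_univ w⟩
    · rw [Finset.card_erase_of_mem (Finset.mem_univ v), Finset.card_univ]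
      exact le_of_eq hvdeg.symm
  have hv : ∀ w, w ≠ v → G.Adj v w := by
    intro w hw
    have : w ∈ G.neighborFinset v := by
      rw [hnb]; exact Finset.mem_erase.2 ⟨hw, Finset.mem_univ w⟩
    simpa using this
  -- the leaf
  obtain ⟨u, hu1⟩ := G.exists_minimal_degree_vertex
  have hudeg : G.degree u = 1 := by rw [← hu1, hdelta]
  -- |V| ≥ 3
  have hn3 : 3 ≤ Fintype.card V := by
    by_contra h
    push_neg at h
    have h1 : 1 ≤ Fintype.card V := Fintype.card_pos
    interval_cases hn : Fintype.card V
    · -- card = 1 : degree u ≤ 0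
      have := G.degree_lt_card_verts u
      omega
    · -- card = 2 : every vertex is full, contradiction with card fullVertices = 1
      have hall : ∀ w : V, w = v := by
        intro w
        by_cases hwv : w = v
        · exact hwv
        · apply hfulluniq
          have hadj : G.Adj w v := (hv w hwv).symm
          have h1 : 1 ≤ G.degree w := by
            rw [← SimpleGraph.card_neighborFinset_eq_degree]
            exact Finset.card_pos.2 ⟨v, by simpa using hadj⟩
          have h2 : G.degree w ≤ Fintype.card V - 1 := by
            have := G.degree_lt_card_verts w
            omega
          omega
      have : Fintype.card V = 1 := by
        rw [Fintype.card_eq_one_iff]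
        exact ⟨v, hall⟩
      omega
  have hvu : v ≠ u := by
    intro h
    rw [← h] at hudeg
    omega
  -- u's unique neighbor is v
  have hnbu : G.neighborFinset u = {v} := by
    apply (Finset.eq_of_subset_of_card_le _ _).symm
    · intro w hw
      simp only [Finset.mem_singleton] at hw
      subst hw
      simpa using (hv u hvu.symm).symm
    · rw [SimpleGraph.card_neighborFinset_eq_degree, hudeg, Finset.card_singleton]
  have hu : ∀ w, G.Adj w u → w = v := by
    intro w hw
    have : w ∈ G.neighborFinset u := by simpa using hw.symm
    rwa [hnbu, Finset.mem_singleton] at this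
  -- {u} is not dominating
  have hud : ¬ IsDomSet G {u} := by
    intro hd
    have hlt : ({v, u} : Finset V).card < (Finset.univ : Finset V).card := by
      have : ({v, u} : Finset V).card ≤ 2 := (Finset.card_insert_le v {u}).trans (by simp)
      rw [Finset.card_univ]; omega
    obtain ⟨w, hw⟩ : ∃ w, w ∉ ({v, u} : Finset V) := by
      by_contra h
      push_neg at h
      have := Finset.card_le_card (fun x _ => h x : (Finset.univ : Finset V) ⊆ {v, u})
      omega
    simp only [Finset.mem_insert, Finset.mem_singleton, not_or] at hw
    obtain ⟨hwv, hwu⟩ := hw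
    obtain ⟨x, hx, hadj⟩ := hd w (by simpa using hwu)
    simp only [Finset.mem_singleton] at hx
    subst hx
    exact hwv (hu w hadj.symm)
  -- sSup manipulation
  set Cards := {k | ∃ π, IsCPartition G π ∧ k = π.card} with hCards
  have hbddC : BddAbove Cards := by
    refine ⟨Fintype.card (Finset V), ?_⟩
    rintro k ⟨π, -, rfl⟩
    exact (Finset.card_le_card (Finset.subset_univ π)).trans (le_of_eq (Finset.card_univ))
  have hCne : Cards.Nonempty := by
    by_contra h
    rw [Set.not_nonempty_iff_eq_empty] at h
    rw [coalitionNumber, ← hCards, h, csSup_empty] at hC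
    simp at hC
    omega
  have hmem : s ∈ Cards := by
    rw [← hC, coalitionNumber, ← hCards]
    exact Nat.sSup_mem hCne hbddC
  obtain ⟨π₀, hπ₀, hπ₀card⟩ := hmem
  have hcount : ∀ π, IsCPartition G π → cpCount G π = π.card - 2 :=
    fun π hπ => key G v u hv hu hvu hud π hπ
  have hle : ∀ π, IsCPartition G π → π.card ≤ s := by
    intro π hπ
    rw [← hC, coalitionNumber]
    exact le_csSup hbddC ⟨π, hπ, rfl⟩
  rw [coalitionCount]
  apply le_antisymm
  · apply csSup_le
    · exact ⟨s - 2, π₀, hπ₀, by rw [hcount _ hπ₀, ← hπ₀card]⟩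
    · rintro k ⟨π, hπ, rfl⟩
      rw [hcount _ hπ]
      have := hle π hπ
      omega
  · apply le_csSup
    · refine ⟨s - 2, ?_⟩
      rintro k ⟨π, hπ, rfl⟩
      rw [hcount _ hπ]
      have := hle π hπ
      omega
    · exact ⟨π₀, hπ₀, by rw [hcount _ hπ₀, ← hπ₀card]⟩
end

section
/- Let G be a finite simple graph with exactly one full vertex and with minimum degree δ(G) = 1, and suppose the coalition number C(G) equals s with s ≥ 2. Then for every c-partition π of G of order s, the coalition graph CG(G, π) is isomorphic to the disjoint union K_1 ∪ K_{1, s−2} of an isolated vertex and a star with s − 2 leaves. -/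
open scoped Classical

/-- The graph `K_1 ∪ K_{1, s-2}` on `Fin s` (for `s ≥ 2`): vertex `0` is isolated, vertex `1`
is the center of a star whose leaves are the vertices `2, …, s-1`. -/
def K1UnionStar (s : ℕ) : SimpleGraph (Fin s) where
  Adj a b := ((a : ℕ) = 1 ∧ 2 ≤ (b : ℕ)) ∨ ((b : ℕ) = 1 ∧ 2 ≤ (a : ℕ))
  symm := by constructor; rintro a b (h | h); exacts [Or.inr h, Or.inl h]
  loopless := by constructor; rintro a (⟨h1, h2⟩ | ⟨h1, h2⟩) <;> omega

/-- If `G` has exactly one full vertex, `δ(G) = 1`, and `C(G) = s ≥ 2`, then for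
every c-partition `π` of `G` of order `s`, `CG(G, π) ≅ K_1 ∪ K_{1, s-2}`. -/
theorem stmt_8 {V : Type} [Fintype V] (G : SimpleGraph V) (s : ℕ)
    (hfull : (fullVertices G).card = 1)
    (hdelta : G.minDegree = 1)
    (hs : 2 ≤ s) (hC : coalitionNumber G = s) :
    ∀ π : Finset (Finset V), IsCPartition G π → π.card = s →
      Nonempty (coalitionGraph G π ≃g K1UnionStar s) := by
  classical
  -- the unique full vertex u
  obtain ⟨u, hu⟩ := Finset.card_eq_one.mp hfull
  have humem : u ∈ fullVertices G := hu ▸ Finset.mem_singleton_self u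
  have hudeg : G.degree u = Fintype.card V - 1 := (Finset.mem_filter.mp humem).2
  have hNu : G.neighborFinset u = Finset.univ.erase u := by
    apply Finset.eq_of_subset_of_card_le
    · intro x hx
      exact Finset.mem_erase.mpr
        ⟨(((G.mem_neighborFinset u x).mp hx).symm).ne, Finset.mem_univ x⟩
    · rw [Finset.card_erase_of_mem (Finset.mem_univ u), Finset.card_univ,
        G.card_neighborFinset_eq_degree, hudeg]
  have hu_adj : ∀ v, v ≠ u → G.Adj u v := by
    intro v hv
    exact (G.mem_neighborFinset u v).mp
      (hNu ▸ Finset.mem_erase.mpr ⟨hv, Finset.mem_univ v⟩)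
  have hfull_eq : ∀ x, G.degree x = Fintype.card V - 1 → x = u := by
    intro x hx
    have : x ∈ fullVertices G := Finset.mem_filter.mpr ⟨Finset.mem_univ x, hx⟩
    rw [hu] at this
    exact Finset.mem_singleton.mp this
  have : Nonempty V := ⟨u⟩
  -- a vertex w of degree 1
  obtain ⟨w, hwdeg'⟩ := G.exists_minimal_degree_vertex
  have hdeg_w : G.degree w = 1 := by rw [← hwdeg', hdelta]
  have hn2 : 2 ≤ Fintype.card V := by
    have := G.degree_lt_card_verts w
    omega
  -- |V| ≥ 3
  have hn3 : 3 ≤ Fintype.card V := by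
    by_contra h
    have hcard2 : Fintype.card V = 2 := by omega
    obtain ⟨x, hx⟩ := Fintype.exists_ne_of_one_lt_card (by omega) u
    have hadjx : G.Adj x u := (hu_adj x hx).symm
    have h1 : 0 < G.degree x := by
      rw [← G.card_neighborFinset_eq_degree]
      exact Finset.card_pos.mpr ⟨u, (G.mem_neighborFinset x u).mpr hadjx⟩
    have h2 : G.degree x < 2 := hcard2 ▸ G.degree_lt_card_verts x
    have : x = u := hfull_eq x (by omega)
    exact hx this
  have huw : u ≠ w := by
    intro h
    rw [h, hdeg_w] at hudeg
    omega
  -- the only neighbor of w is u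
  have hNw : ∀ x, G.Adj x w → x = u := by
    have h1 : u ∈ G.neighborFinset w :=
      (G.mem_neighborFinset w u).mpr (hu_adj w huw.symm).symm
    obtain ⟨y, hy⟩ := Finset.card_eq_one.mp
      (by rw [G.card_neighborFinset_eq_degree, hdeg_w])
    rw [hy] at h1
    have hyu : y = u := (Finset.mem_singleton.mp h1).symm
    intro x hx
    have : x ∈ G.neighborFinset w := (G.mem_neighborFinset w x).mpr hx.symm
    rw [hy, hyu] at this
    exact Finset.mem_singleton.mp this
  -- now the partition
  intro π hπ hcard
  obtain ⟨hneπ, hdisj, hcov, hrule⟩ := hπ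
  have mem_unique : ∀ X ∈ π, ∀ Y ∈ π, ∀ x, x ∈ X → x ∈ Y → X = Y := by
    intro X hX Y hY x hxX hxY
    by_contra h
    exact Finset.disjoint_left.mp (hdisj X hX Y hY h) hxX hxY
  obtain ⟨A, hAπ, huA⟩ := hcov u
  obtain ⟨B, hBπ, hwB⟩ := hcov w
  -- A is dominating
  have hA_dom : IsDomSet G A := by
    intro v hv
    exact ⟨u, huA, hu_adj v (fun h => hv (h ▸ huA))⟩
  have hAB : A ≠ B := by
    intro h
    rcases hrule B hBπ with ⟨v, hv, _⟩ | ⟨D, hDπ, hco⟩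
    · have huB' : u ∈ B := h ▸ huA
      rw [hv] at hwB huB'
      exact huw ((Finset.mem_singleton.mp huB').trans (Finset.mem_singleton.mp hwB).symm)
    · exact hco.2.1 (h ▸ hA_dom)
  have hwA : w ∉ A := fun hwA => hAB (mem_unique A hAπ B hBπ w hwA hwB)
  have huB : u ∉ B := fun huB => hAB (mem_unique A hAπ B hBπ u huA huB)
  -- a set avoiding u and w cannot dominate
  have key1 : ∀ S : Finset V, u ∉ S → w ∉ S → ¬ IsDomSet G S := by
    intro S huS hwS hdom
    obtain ⟨x, hxS, hadj⟩ := hdom w hwS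
    exact huS (hNw x hadj ▸ hxS)
  -- uniqueness of containing sets
  have memA : ∀ X ∈ π, u ∈ X → X = A := fun X hX h => mem_unique X hX A hAπ u h huA
  have memB : ∀ X ∈ π, w ∈ X → X = B := fun X hX h => mem_unique X hX B hBπ w h hwB
  -- B is not dominating
  have hB_not_dom : ¬ IsDomSet G B := by
    intro hdom
    rcases hrule B hBπ with ⟨v, hv, hvdom⟩ | ⟨D, hDπ, hco⟩
    · have hvw : v = w := by
        rw [hv] at hwB; exact (Finset.mem_singleton.mp hwB).symm
      obtain ⟨t, htu, htw⟩ : ∃ t, t ≠ u ∧ t ≠ w := by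
        by_contra h
        push_neg at h
        have hsub : (Finset.univ : Finset V) ⊆ {u, w} := by
          intro t _
          rcases eq_or_ne t u with h' | h'
          · exact Finset.mem_insert.mpr (Or.inl h')
          · exact Finset.mem_insert.mpr (Or.inr (Finset.mem_singleton.mpr (h t h')))
        have := Finset.card_le_card hsub
        have h2 : ({u, w} : Finset V).card ≤ 2 :=
          le_trans (Finset.card_insert_le u {w}) (by simp)
        rw [Finset.card_univ] at this
        omega
      rw [hv, hvw] at hvdom
      obtain ⟨x, hxm, hadj⟩ := hvdom t (fun ht => htw (Finset.mem_singleton.mp ht))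
      have hxw : x = w := Finset.mem_singleton.mp hxm
      exact htu (hNw t (hxw ▸ hadj).symm)
    · exact hco.2.1 hdom
  -- every other set forms a coalition with B
  have keyC : ∀ C ∈ π, C ≠ A → C ≠ B → IsCoalition G C B := by
    intro C hCπ hCA hCB
    have huC : u ∉ C := fun h => hCA (memA C hCπ h)
    have hwC : w ∉ C := fun h => hCB (memB C hCπ h)
    have hC_not_dom := key1 C huC hwC
    rcases hrule C hCπ with ⟨v, hv, hvdom⟩ | ⟨D, hDπ, hco⟩
    · exact absurd hvdom hC_not_dom
    · obtain ⟨hCD, hnd1, hnd2, hdomU⟩ := hco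
      have huD : u ∉ D := by
        intro h
        exact hnd2 (memA D hDπ h ▸ hA_dom)
      have hwD : w ∈ D := by
        by_contra hwD
        have hwU : w ∉ C ∪ D := fun h => by
          rcases Finset.mem_union.mp h with h | h
          exacts [hwC h, hwD h]
        obtain ⟨x, hxU, hadj⟩ := hdomU w hwU
        rw [hNw x hadj] at hxU
        rcases Finset.mem_union.mp hxU with h | h
        exacts [huC h, huD h]
      have : D = B := memB D hDπ hwD
      rw [this] at hCD hnd2 hdomU
      exact ⟨hCD, hnd1, hnd2, hdomU⟩
  -- adjacency characterization
  have adj_iff : ∀ X ∈ π, ∀ Y ∈ π,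
      (IsCoalition G X Y ↔ ((X = B ∧ Y ≠ A ∧ Y ≠ B) ∨ (Y = B ∧ X ≠ A ∧ X ≠ B))) := by
    intro X hXπ Y hYπ
    constructor
    · rintro ⟨hXY, hndX, hndY, hdomU⟩
      have hXA : X ≠ A := fun h => hndX (h ▸ hA_dom)
      have hYA : Y ≠ A := fun h => hndY (h ▸ hA_dom)
      by_cases hXB : X = B
      · exact Or.inl ⟨hXB, hYA, fun h => hXY (hXB.trans h.symm)⟩
      · refine Or.inr ⟨?_, hXA, hXB⟩
        have huX : u ∉ X := fun h => hXA (memA X hXπ h)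
        have huY : u ∉ Y := fun h => hYA (memA Y hYπ h)
        have hwX : w ∉ X := fun h => hXB (memB X hXπ h)
        have hwY : w ∈ Y := by
          by_contra hwY
          have hwU : w ∉ X ∪ Y := fun h => by
            rcases Finset.mem_union.mp h with h | h
            exacts [hwX h, hwY h]
          obtain ⟨x, hxU, hadj⟩ := hdomU w hwU
          rw [hNw x hadj] at hxU
          rcases Finset.mem_union.mp hxU with h | h
          exacts [huX h, huY h]
        exact memB Y hYπ hwY
    · rintro (⟨hXB, hYA, hYB⟩ | ⟨hYB, hXA, hXB⟩)
      · obtain ⟨h1, h2, h3, h4⟩ := keyC Y hYπ hYA hYB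
        rw [hXB]
        exact ⟨h1.symm, h3, h2, by rwa [Finset.union_comm]⟩
      · rw [hYB]
        exact keyC X hXπ hXA hXB
  -- build the equivalence
  set T := {X // X ∈ π}
  have hTcard : Fintype.card T = s := by rw [Fintype.card_coe, hcard]
  let e0 : T ≃ Fin s := Fintype.equivFinOfCardEq hTcard
  let a : T := ⟨A, hAπ⟩
  let b : T := ⟨B, hBπ⟩
  have hab : a ≠ b := fun h => hAB (congrArg Subtype.val h)
  let z : Fin s := ⟨0, by omega⟩
  let o : Fin s := ⟨1, by omega⟩
  have hzo : z ≠ o := by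
    intro h
    have := congrArg Fin.val h
    simp [z, o] at this
  let e1 : T ≃ Fin s := e0.trans (Equiv.swap (e0 a) z)
  have he1a : e1 a = z := by simp [e1]
  let e2 : T ≃ Fin s := e1.trans (Equiv.swap (e1 b) o)
  have he2b : e2 b = o := by simp [e2]
  have he2a : e2 a = z := by
    show Equiv.swap (e1 b) o (e1 a) = z
    rw [he1a]
    refine Equiv.swap_apply_of_ne_of_ne ?_ hzo
    intro h
    exact hab (e1.injective (he1a.trans h))
  have heqb : ∀ X : T, ((e2 X : ℕ) = 1 ↔ X = b) := by
    intro X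
    constructor
    · intro h
      apply e2.injective
      rw [he2b]
      exact Fin.ext h
    · intro h; rw [h, he2b]
  have heqa : ∀ X : T, ((e2 X : ℕ) = 0 ↔ X = a) := by
    intro X
    constructor
    · intro h
      apply e2.injective
      rw [he2a]
      exact Fin.ext h
    · intro h; rw [h, he2a]
  refine ⟨⟨e2, ?_⟩⟩
  intro X Y
  show (K1UnionStar s).Adj (e2 X) (e2 Y) ↔ IsCoalition G X.1 Y.1
  rw [adj_iff X.1 X.2 Y.1 Y.2]
  have hXb : (X.1 = B) ↔ X = b := ⟨fun h => Subtype.ext h, fun h => congrArg Subtype.val h⟩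
  have hYb : (Y.1 = B) ↔ Y = b := ⟨fun h => Subtype.ext h, fun h => congrArg Subtype.val h⟩
  have hXa : (X.1 = A) ↔ X = a := ⟨fun h => Subtype.ext h, fun h => congrArg Subtype.val h⟩
  have hYa : (Y.1 = A) ↔ Y = a := ⟨fun h => Subtype.ext h, fun h => congrArg Subtype.val h⟩
  have h2X : (2 ≤ (e2 X : ℕ)) ↔ (X ≠ a ∧ X ≠ b) := by
    simp only [ne_eq, ← heqa X, ← heqb X]; omega
  have h2Y : (2 ≤ (e2 Y : ℕ)) ↔ (Y ≠ a ∧ Y ≠ b) := by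
    simp only [ne_eq, ← heqa Y, ← heqb Y]; omega
  show ((e2 X : ℕ) = 1 ∧ 2 ≤ (e2 Y : ℕ)) ∨ ((e2 Y : ℕ) = 1 ∧ 2 ≤ (e2 X : ℕ)) ↔ _
  simp only [ne_eq, heqb X, heqb Y, h2X, h2Y, hXb, hYb, hXa, hYa]
end

section
/- For any finite simple graph G with exactly f full vertices that admits at least one coalition partition, the coalition count satisfies c(G) ≥ ⌈(C(G) − f)/2⌉, where C(G) is the coalition number of G. -/
open scoped Classical

/-- A fixed-point-free symmetric finset of pairs has even cardinality. -/
lemma even_card_swap {α : Type*} [DecidableEq α] :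
    ∀ E : Finset (α × α), (∀ p ∈ E, Prod.swap p ∈ E) → (∀ p ∈ E, p.1 ≠ p.2) →
      E.card % 2 = 0 := by
  intro E
  induction E using Finset.strongInduction with
  | _ E ih =>
    intro hsym hnd
    rcases E.eq_empty_or_nonempty with rfl | ⟨p, hp⟩
    · simp
    · have hps : Prod.swap p ∈ E := hsym p hp
      have hne : Prod.swap p ≠ p := by
        intro h
        rw [Prod.ext_iff] at h
        exact hnd p hp h.1.symm
      set E' := (E.erase p).erase (Prod.swap p) with hE'
      have hsub : E' ⊂ E :=
        lt_of_le_of_lt (Finset.erase_subset _ _) (Finset.erase_ssubset hp)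
      have hmem1 : Prod.swap p ∈ E.erase p := Finset.mem_erase.2 ⟨hne, hps⟩
      have hc1 : (E.erase p).card = E.card - 1 := Finset.card_erase_of_mem hp
      have hc2 : E'.card = (E.erase p).card - 1 := Finset.card_erase_of_mem hmem1
      have hpos : 0 < E.card := Finset.card_pos.2 ⟨p, hp⟩
      have hpos2 : 0 < (E.erase p).card := Finset.card_pos.2 ⟨Prod.swap p, hmem1⟩
      have hsym' : ∀ q ∈ E', Prod.swap q ∈ E' := by
        intro q hq
        rw [hE', Finset.mem_erase, Finset.mem_erase] at hq ⊢
        refine ⟨?_, ?_, hsym q hq.2.2⟩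
        · intro h
          exact hq.2.1 (by rw [← Prod.swap_swap q, h, Prod.swap_swap])
        · intro h
          exact hq.1 (by rw [← Prod.swap_swap q, h])
      have hnd' : ∀ q ∈ E', q.1 ≠ q.2 := fun q hq =>
        hnd q (Finset.mem_of_mem_erase (Finset.mem_of_mem_erase hq))
      have := ih E' hsub hsym' hnd'
      omega

/-- For any graph `G` with exactly `f` full vertices admitting a coalition
partition, `c(G) ≥ ⌈(C(G) - f) / 2⌉`. -/
theorem stmt_9 {V : Type} [Fintype V] (G : SimpleGraph V) (f : ℕ)
    (hf : (fullVertices G).card = f)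
    (hex : ∃ π, IsCPartition G π) :
    (coalitionNumber G - f + 1) / 2 ≤ coalitionCount G := by
  classical
  -- the supremum defining `coalitionNumber` is attained
  have hSne : {k | ∃ π, IsCPartition G π ∧ k = π.card}.Nonempty := by
    obtain ⟨π, hπ⟩ := hex; exact ⟨π.card, π, hπ, rfl⟩
  have hSbdd : BddAbove {k | ∃ π, IsCPartition G π ∧ k = π.card} := by
    refine ⟨Fintype.card (Finset V), ?_⟩
    rintro k ⟨π, hπ, rfl⟩
    exact le_trans (Finset.card_le_univ π) (le_of_eq Finset.card_univ)
  obtain ⟨π, hπ, hcard⟩ : ∃ π, IsCPartition G π ∧ coalitionNumber G = π.card :=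
    Nat.sSup_mem hSne hSbdd
  set E := (π ×ˢ π).filter (fun p => IsCoalition G p.1 p.2) with hE
  set D := π.filter (fun A => ∃ v, A = {v} ∧ IsDomSet G A) with hD
  set N := π.filter (fun A => ∃ B ∈ π, IsCoalition G A B) with hN
  -- π ⊆ D ∪ N
  have hsubDN : π ⊆ D ∪ N := by
    intro A hA
    rcases hπ.2.2.2 A hA with h | h
    · exact Finset.mem_union_left _ (Finset.mem_filter.2 ⟨hA, h⟩)
    · exact Finset.mem_union_right _ (Finset.mem_filter.2 ⟨hA, h⟩)
  have hDN : π.card ≤ D.card + N.card :=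
    le_trans (Finset.card_le_card hsubDN) (Finset.card_union_le _ _)
  -- D.card ≤ f
  have hDf : D.card ≤ f := by
    have hsub : D ⊆ (fullVertices G).image (fun v => ({v} : Finset V)) := by
      intro A hA
      obtain ⟨-, v, hv, hdom⟩ := Finset.mem_filter.1 hA
      subst hv
      have hfull : v ∈ fullVertices G := by
        have hnb : G.neighborFinset v = Finset.univ.erase v := by
          ext u
          simp only [SimpleGraph.mem_neighborFinset, Finset.mem_erase, Finset.mem_univ,
            and_true]
          constructor
          · exact fun h => h.ne'
          · intro hu
            obtain ⟨w, hw, hadj⟩ := hdom u (by simp [hu])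
            rw [Finset.mem_singleton] at hw
            exact hw ▸ hadj
        have hdeg : G.degree v = (Finset.univ.erase v).card := by
          rw [← hnb]; rfl
        simp only [fullVertices, Finset.mem_filter, Finset.mem_univ, true_and]
        rw [hdeg, Finset.card_erase_of_mem (Finset.mem_univ v), Finset.card_univ]
      exact Finset.mem_image.2 ⟨v, hfull, rfl⟩
    calc D.card ≤ ((fullVertices G).image (fun v => ({v} : Finset V))).card :=
          Finset.card_le_card hsub
      _ ≤ (fullVertices G).card := Finset.card_image_le
      _ = f := hf
  -- N.card ≤ E.card
  have hNE : N.card ≤ E.card := by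
    have hsub : N ⊆ E.image Prod.fst := by
      intro A hA
      obtain ⟨hAπ, B, hBπ, hco⟩ := Finset.mem_filter.1 hA
      exact Finset.mem_image.2 ⟨(A, B),
        Finset.mem_filter.2 ⟨Finset.mem_product.2 ⟨hAπ, hBπ⟩, hco⟩, rfl⟩
    exact le_trans (Finset.card_le_card hsub) Finset.card_image_le
  -- E has even cardinality
  have heven : E.card % 2 = 0 := by
    apply even_card_swap
    · rintro ⟨A, B⟩ hp
      obtain ⟨hmem, h1, h2, h3, h4⟩ := Finset.mem_filter.1 hp
      rw [Finset.mem_product] at hmem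
      exact Finset.mem_filter.2 ⟨Finset.mem_product.2 ⟨hmem.2, hmem.1⟩,
        fun h => h1 h.symm, h3, h2, by rwa [Finset.union_comm]⟩
    · rintro ⟨A, B⟩ hp
      exact (Finset.mem_filter.1 hp).2.1
  -- cpCount of π is E.card / 2
  have hcp : cpCount G π = E.card / 2 := rfl
  -- cpCount G π ≤ coalitionCount G
  have hle : cpCount G π ≤ coalitionCount G := by
    apply le_csSup
    · refine ⟨Fintype.card (Finset V × Finset V), ?_⟩
      rintro k ⟨σ, hσ, rfl⟩
      calc cpCount G σ ≤ ((σ ×ˢ σ).filter (fun p => IsCoalition G p.1 p.2)).card :=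
            Nat.div_le_self _ _
        _ ≤ Fintype.card (Finset V × Finset V) :=
            le_trans (Finset.card_le_univ _) (le_of_eq Finset.card_univ)
    · exact ⟨π, hπ, rfl⟩
  omega
end

section
/- The coalition count of the cycle C_4 on four vertices equals 6, i.e., c(C_4) = 6. -/
open scoped Classical

instance domDec {S : Finset (Fin 4)} : Decidable (IsDomSet (SimpleGraph.cycleGraph 4) S) := by
  unfold IsDomSet; infer_instance

instance coalDec {A B : Finset (Fin 4)} :
    Decidable (IsCoalition (SimpleGraph.cycleGraph 4) A B) :=
  decidable_of_iff (A ≠ B ∧ ¬ IsDomSet (SimpleGraph.cycleGraph 4) A ∧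
    ¬ IsDomSet (SimpleGraph.cycleGraph 4) B ∧ IsDomSet (SimpleGraph.cycleGraph 4) (A ∪ B))
    (by rw [IsCoalition]; congr!)

/-- `c(C_4) = 6`. -/
theorem stmt_11 : coalitionCount (SimpleGraph.cycleGraph 4) = 6 := by
  have hcoal : ∀ A ∈ ({{0}, {1}, {2}, {3}} : Finset (Finset (Fin 4))),
      ∀ B ∈ ({{0}, {1}, {2}, {3}} : Finset (Finset (Fin 4))), A ≠ B →
      IsCoalition (SimpleGraph.cycleGraph 4) A B := by decide
  set π : Finset (Finset (Fin 4)) := {{0}, {1}, {2}, {3}} with hπ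
  have hpart : IsCPartition (SimpleGraph.cycleGraph 4) π := by
    refine ⟨by decide, ?_, by decide, fun A hA => ?_⟩
    · intro A hA B hB hne
      rw [Finset.disjoint_left]
      fin_cases hA <;> fin_cases hB <;> simp_all
    · right
      fin_cases hA
      · exact ⟨{1}, by decide, hcoal _ (by decide) _ (by decide) (by decide)⟩
      · exact ⟨{0}, by decide, hcoal _ (by decide) _ (by decide) (by decide)⟩
      · exact ⟨{0}, by decide, hcoal _ (by decide) _ (by decide) (by decide)⟩
      · exact ⟨{0}, by decide, hcoal _ (by decide) _ (by decide) (by decide)⟩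
  have hfilter : ∀ (inst : DecidablePred fun p : Finset (Fin 4) × Finset (Fin 4) =>
      IsCoalition (SimpleGraph.cycleGraph 4) p.1 p.2),
      @Finset.filter _ _ inst (π ×ˢ π) = π.offDiag := by
    intro inst
    ext p
    simp only [Finset.mem_filter, Finset.mem_offDiag, Finset.mem_product]
    constructor
    · rintro ⟨⟨h1, h2⟩, hne, -⟩; exact ⟨h1, h2, hne⟩
    · rintro ⟨h1, h2, hne⟩; exact ⟨⟨h1, h2⟩, hcoal _ h1 _ h2 hne⟩
  have hcount : cpCount (SimpleGraph.cycleGraph 4) π = 6 := by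
    unfold cpCount
    rw [hfilter, Finset.offDiag_card]
    decide
  have hub : ∀ k ∈ {k | ∃ σ, IsCPartition (SimpleGraph.cycleGraph 4) σ ∧
      k = cpCount (SimpleGraph.cycleGraph 4) σ}, k ≤ 6 := by
    rintro k ⟨σ, ⟨hne, hdisj, hcov, -⟩, rfl⟩
    have hcard : σ.card ≤ 4 := by
      calc σ.card ≤ (σ.biUnion id).card := by
            apply Finset.card_le_card_biUnion
            · intro A hA B hB hAB; exact hdisj A hA B hB hAB
            · exact fun A hA => by simpa using hne A hA
        _ ≤ (Finset.univ : Finset (Fin 4)).card := Finset.card_le_card (Finset.subset_univ _)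
        _ = 4 := by simp
    have hsub : ∀ (inst : DecidablePred fun p : Finset (Fin 4) × Finset (Fin 4) =>
        IsCoalition (SimpleGraph.cycleGraph 4) p.1 p.2),
        @Finset.filter _ _ inst (σ ×ˢ σ) ⊆ σ.offDiag := by
      intro inst p hp
      simp only [Finset.mem_filter, Finset.mem_product] at hp
      exact Finset.mem_offDiag.2 ⟨hp.1.1, hp.1.2, hp.2.1⟩
    have h1 : ∀ (inst : DecidablePred fun p : Finset (Fin 4) × Finset (Fin 4) =>
        IsCoalition (SimpleGraph.cycleGraph 4) p.1 p.2),
        (@Finset.filter _ _ inst (σ ×ˢ σ)).card ≤ 12 := by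
      intro inst
      calc _ ≤ σ.offDiag.card := Finset.card_le_card (hsub inst)
        _ = σ.card * σ.card - σ.card := σ.offDiag_card
        _ ≤ σ.card * 4 - σ.card := Nat.sub_le_sub_right (Nat.mul_le_mul_left _ hcard) _
        _ ≤ 12 := by omega
    unfold cpCount
    exact le_trans (Nat.div_le_div_right (h1 _)) (by norm_num)
  have hmem : 6 ∈ {k | ∃ σ, IsCPartition (SimpleGraph.cycleGraph 4) σ ∧
      k = cpCount (SimpleGraph.cycleGraph 4) σ} := ⟨π, hpart, hcount.symm⟩
  unfold coalitionCount
  exact le_antisymm (csSup_le ⟨6, hmem⟩ hub) (le_csSup ⟨6, hub⟩ hmem)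
end

section
/- The coalition number of the cycle C_4 on four vertices equals 4, i.e., C(C_4) = 4. -/
set_option synthInstance.maxSize 2000 in
set_option synthInstance.maxHeartbeats 1000000 in
set_option maxHeartbeats 2000000 in
theorem aux_c4 : ∀ A ∈ ({{0},{1},{2},{3}} : Finset (Finset (Fin 4))),
    (∃ v, A = {v} ∧ ∀ v ∉ A, ∃ u ∈ A, ((u - v : Fin 4) : ℕ) = 1 ∨ ((v - u : Fin 4) : ℕ) = 1) ∨
      ∃ B ∈ ({{0},{1},{2},{3}} : Finset (Finset (Fin 4))),
        A ≠ B ∧ (¬ ∀ v ∉ A, ∃ u ∈ A, ((u - v : Fin 4) : ℕ) = 1 ∨ ((v - u : Fin 4) : ℕ) = 1) ∧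
        (¬ ∀ v ∉ B, ∃ u ∈ B, ((u - v : Fin 4) : ℕ) = 1 ∨ ((v - u : Fin 4) : ℕ) = 1) ∧
        ∀ v : Fin 4, ¬(v ∈ A ∨ v ∈ B) →
          ∃ u, (u ∈ A ∨ u ∈ B) ∧ (((u - v : Fin 4) : ℕ) = 1 ∨ ((v - u : Fin 4) : ℕ) = 1) := by
  decide


open scoped Classical

/-- `C(C_4) = 4`. -/
theorem stmt_12 : coalitionNumber (SimpleGraph.cycleGraph 4) = 4 := by
  have hmem : (4 : ℕ) ∈ {k | ∃ π, IsCPartition (SimpleGraph.cycleGraph 4) π ∧ k = π.card} := by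
    refine ⟨({{0},{1},{2},{3}} : Finset (Finset (Fin 4))), ?_, by decide⟩
    constructor
    · decide
    constructor
    · decide
    constructor
    · decide
    · simp only [IsCoalition, IsDomSet, SimpleGraph.cycleGraph_adj', Finset.mem_union]
      exact aux_c4
  have hub : ∀ k ∈ {k | ∃ π, IsCPartition (SimpleGraph.cycleGraph 4) π ∧ k = π.card}, k ≤ 4 := by
    rintro k ⟨π, ⟨hne, hdisj, hcov, -⟩, rfl⟩
    calc π.card = ∑ A ∈ π, 1 := by simp
    _ ≤ ∑ A ∈ π, A.card := Finset.sum_le_sum fun A hA => (hne A hA).card_pos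
    _ = (π.biUnion id).card := (Finset.card_biUnion (fun A hA B hB h => hdisj A hA B hB h)).symm
    _ ≤ (Finset.univ : Finset (Fin 4)).card := Finset.card_le_card (Finset.subset_univ _)
    _ = 4 := by decide
  exact le_antisymm (csSup_le ⟨4, hmem⟩ hub) (le_csSup ⟨4, hub⟩ hmem)
end

section
/- For every n ≥ 3, the star K_{1, n−1} on n vertices satisfies c(K_{1, n−1}) = 1, i.e., the coalition count of the star with n − 1 leaves equals 1. -/
open scoped Classical

/-- The star `K_{1, n-1}` on `Fin n`: vertex `0` is the center, adjacent to all others. -/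
def starGraph (n : ℕ) : SimpleGraph (Fin n) where
  Adj a b := a ≠ b ∧ ((a : ℕ) = 0 ∨ (b : ℕ) = 0)
  symm := by constructor; rintro a b ⟨h1, h2⟩; exact ⟨h1.symm, h2.symm⟩
  loopless := by constructor; rintro a ⟨h, -⟩; exact h rfl


section StarAux

lemma union_indep {α : Type*} (i1 i2 : DecidableEq α) (A B : Finset α) :
    @Union.union _ (@Finset.instUnion _ i1) A B = @Union.union _ (@Finset.instUnion _ i2) A B := by
  ext a
  rw [@Finset.mem_union _ i1, @Finset.mem_union _ i2]

variable {n : ℕ}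

lemma star_val_zero [NeZero n] : ((0 : Fin n) : ℕ) = 0 := rfl

lemma star_dom_of_zero_mem [NeZero n] {S : Finset (Fin n)} (h0 : (0 : Fin n) ∈ S) :
    IsDomSet (starGraph n) S := by
  intro v hv
  refine ⟨0, h0, ?_, Or.inl star_val_zero⟩
  rintro rfl; exact hv h0

lemma star_dom_eq [NeZero n] {S : Finset (Fin n)} (h0 : (0 : Fin n) ∉ S)
    (hS : IsDomSet (starGraph n) S) : S = Finset.univ \ {0} := by
  ext v
  simp only [Finset.mem_sdiff, Finset.mem_univ, Finset.mem_singleton, true_and]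
  constructor
  · intro hv
    rintro rfl; exact h0 hv
  · intro hv
    by_contra hvS
    obtain ⟨u, huS, hne, h⟩ := hS v hvS
    rcases h with h | h
    · have : u = 0 := Fin.ext (by simpa using h)
      exact h0 (this ▸ huS)
    · exact hv (Fin.ext (by simpa using h))

lemma star_dom_leaves (hn : 3 ≤ n) [NeZero n] :
    IsDomSet (starGraph n) (Finset.univ \ {0}) := by
  intro v hv
  have hv0 : v = 0 := by simpa using hv
  have h1 : (⟨1, by omega⟩ : Fin n) ≠ 0 := by
    intro h
    have := congrArg Fin.val h
    simpa using this
  refine ⟨⟨1, by omega⟩, by simp [h1], ?_, Or.inr (by simp [hv0, star_val_zero])⟩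
  rw [hv0]; exact h1

lemma star_coalition_union [NeZero n] {A B : Finset (Fin n)}
    (h : IsCoalition (starGraph n) A B) : A ∪ B = Finset.univ \ {0} := by
  obtain ⟨hne, hA, hB, hAB⟩ := h
  have h0A : (0 : Fin n) ∉ A := fun h => hA (star_dom_of_zero_mem h)
  have h0B : (0 : Fin n) ∉ B := fun h => hB (star_dom_of_zero_mem h)
  rw [union_indep _ (instDecidableEqFin n)] at hAB
  exact star_dom_eq (by simp [h0A, h0B]) hAB

lemma star_filter_card_le [NeZero n] {π : Finset (Finset (Fin n))}
    (hπ : IsCPartition (starGraph n) π) :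
    ((π ×ˢ π).filter (fun p => IsCoalition (starGraph n) p.1 p.2)).card ≤ 2 := by
  obtain ⟨hne, hdisj, hcov, hfour⟩ := hπ
  set F := (π ×ˢ π).filter (fun p => IsCoalition (starGraph n) p.1 p.2) with hF
  rcases F.eq_empty_or_nonempty with h | ⟨⟨A₀, B₀⟩, h0⟩
  · simp [h]
  · have h0' := Finset.mem_filter.mp h0
    have hmem0 := Finset.mem_product.mp h0'.1
    have hu0 : A₀ ∪ B₀ = Finset.univ \ {0} := star_coalition_union h0'.2
    have hsub : F ⊆ {(A₀, B₀), (B₀, A₀)} := by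
      rintro ⟨A, B⟩ hAB
      have h' := Finset.mem_filter.mp hAB
      have hmem := Finset.mem_product.mp h'.1
      have hu : A ∪ B = Finset.univ \ {0} := star_coalition_union h'.2
      have key : ∀ C : Finset (Fin n), C ∈ π → C ⊆ A₀ ∪ B₀ → C = A₀ ∨ C = B₀ := by
        intro C hC hCsub
        by_contra hc
        push_neg at hc
        obtain ⟨v, hv⟩ := hne C hC
        rcases Finset.mem_union.mp (hCsub hv) with h | h
        · exact (Finset.disjoint_left.mp (hdisj C hC A₀ hmem0.1 hc.1) hv) h
        · exact (Finset.disjoint_left.mp (hdisj C hC B₀ hmem0.2 hc.2) hv) h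
      have hAsub : A ⊆ A₀ ∪ B₀ := by rw [hu0, ← hu]; exact Finset.subset_union_left
      have hBsub : B ⊆ A₀ ∪ B₀ := by rw [hu0, ← hu]; exact Finset.subset_union_right
      have hAne : A ≠ B := h'.2.1
      rcases key A hmem.1 hAsub with rfl | rfl
      · rcases key B hmem.2 hBsub with rfl | rfl
        · exact absurd rfl hAne
        · simp
      · rcases key B hmem.2 hBsub with rfl | rfl
        · simp
        · exact absurd rfl hAne
    calc F.card ≤ ({(A₀, B₀), (B₀, A₀)} : Finset (Finset (Fin n) × Finset (Fin n))).card :=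
          Finset.card_le_card hsub
      _ ≤ 2 := by
          apply le_trans (Finset.card_insert_le _ _)
          simp

end StarAux

/-- For every `n ≥ 3`, the star `K_{1, n-1}` satisfies `c(K_{1, n-1}) = 1`. -/
theorem stmt_14 (n : ℕ) (hn : 3 ≤ n) : coalitionCount (starGraph n) = 1 := by
  haveI : NeZero n := ⟨by omega⟩
  set o : Fin n := ⟨1, by omega⟩ with ho
  set t : Fin n := ⟨2, by omega⟩ with ht
  have ho0 : o ≠ 0 := by
    intro h; have := congrArg Fin.val h; simp [ho, star_val_zero] at this
  have ht0 : t ≠ 0 := by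
    intro h; have := congrArg Fin.val h; simp [ht, star_val_zero] at this
  have hto : t ≠ o := by
    intro h; have := congrArg Fin.val h; simp [ht, ho] at this
  set S3 : Finset (Fin n) := Finset.univ \ {0, o} with hS3
  have htS3 : t ∈ S3 := by simp [hS3, ht0, hto]
  have hoS3 : o ∉ S3 := by simp [hS3]
  have h0S3 : (0 : Fin n) ∉ S3 := by simp [hS3]
  have hne1 : ({0} : Finset (Fin n)) ≠ {o} := by
    intro h
    have := Finset.mem_singleton.mp (h ▸ Finset.mem_singleton_self (0 : Fin n))
    exact ho0 this.symm
  have hne2 : ({0} : Finset (Fin n)) ≠ S3 := by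
    intro h; exact h0S3 (h ▸ Finset.mem_singleton_self (0 : Fin n))
  have hne3 : ({o} : Finset (Fin n)) ≠ S3 := by
    intro h; exact hoS3 (h ▸ Finset.mem_singleton_self o)
  -- union of {o} and S3 is all leaves
  have hunion : ({o} : Finset (Fin n)) ∪ S3 = Finset.univ \ {0} := by
    ext v
    simp only [Finset.mem_union, Finset.mem_singleton, hS3, Finset.mem_sdiff,
      Finset.mem_univ, true_and, Finset.mem_insert]
    constructor
    · rintro (rfl | h)
      · exact ho0
      · exact fun hv => h (Or.inl hv)
    · intro hv
      by_cases hvo : v = o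
      · exact Or.inl hvo
      · exact Or.inr (by push_neg; exact ⟨hv, hvo⟩)
  have hnd1 : ¬ IsDomSet (starGraph n) {o} := by
    intro h
    have := star_dom_eq (by simp [ho0.symm]) h
    have : t ∈ ({o} : Finset (Fin n)) := by rw [this]; simp [ht0]
    exact hto (Finset.mem_singleton.mp this)
  have hnd3 : ¬ IsDomSet (starGraph n) S3 := by
    intro h
    have := star_dom_eq h0S3 h
    have : o ∈ S3 := by rw [this]; simp [ho0]
    exact hoS3 this
  have hco : IsCoalition (starGraph n) {o} S3 :=
    ⟨hne3, hnd1, hnd3, by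
      rw [union_indep _ (instDecidableEqFin n), hunion]; exact star_dom_leaves hn⟩
  have hco' : IsCoalition (starGraph n) S3 {o} :=
    ⟨hne3.symm, hnd3, hnd1, by
      rw [union_indep _ (instDecidableEqFin n), Finset.union_comm, hunion]
      exact star_dom_leaves hn⟩
  set π : Finset (Finset (Fin n)) := {{0}, {o}, S3} with hπdef
  have hmem0 : ({0} : Finset (Fin n)) ∈ π := by simp [hπdef]
  have hmemo : ({o} : Finset (Fin n)) ∈ π := by simp [hπdef]
  have hmem3 : S3 ∈ π := by simp [hπdef]
  have hcp : IsCPartition (starGraph n) π := by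
    refine ⟨?_, ?_, ?_, ?_⟩
    · intro A hA
      simp only [hπdef, Finset.mem_insert, Finset.mem_singleton] at hA
      rcases hA with rfl | rfl | rfl
      · exact ⟨0, Finset.mem_singleton_self 0⟩
      · exact ⟨o, Finset.mem_singleton_self o⟩
      · exact ⟨t, htS3⟩
    · intro A hA B hB hAB
      simp only [hπdef, Finset.mem_insert, Finset.mem_singleton] at hA hB
      rcases hA with rfl | rfl | rfl <;> rcases hB with rfl | rfl | rfl <;>
        first
          | exact absurd rfl hAB
          | (rw [Finset.disjoint_left]; intro a haA haB;
             simp only [Finset.mem_singleton, hS3, Finset.mem_sdiff, Finset.mem_univ,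
               true_and, Finset.mem_insert] at haA haB <;>
             first
               | (subst haA; simp_all)
               | (subst haB; simp_all)
               | simp_all)
    · intro v
      by_cases hv0 : v = 0
      · exact ⟨{0}, hmem0, by simp [hv0]⟩
      · by_cases hvo : v = o
        · exact ⟨{o}, hmemo, by simp [hvo]⟩
        · exact ⟨S3, hmem3, by simp [hS3, hv0, hvo]⟩
    · intro A hA
      simp only [hπdef, Finset.mem_insert, Finset.mem_singleton] at hA
      rcases hA with rfl | rfl | rfl
      · exact Or.inl ⟨0, rfl, star_dom_of_zero_mem (Finset.mem_singleton_self 0)⟩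
      · exact Or.inr ⟨S3, hmem3, hco⟩
      · exact Or.inr ⟨{o}, hmemo, hco'⟩
  -- the filter has exactly two elements
  set F := (π ×ˢ π).filter (fun p => IsCoalition (starGraph n) p.1 p.2) with hFdef
  have hp1 : (({o} : Finset (Fin n)), S3) ∈ F := by
    rw [hFdef, Finset.mem_filter, Finset.mem_product]
    exact ⟨⟨hmemo, hmem3⟩, hco⟩
  have hp2 : ((S3, ({o} : Finset (Fin n)))) ∈ F := by
    rw [hFdef, Finset.mem_filter, Finset.mem_product]
    exact ⟨⟨hmem3, hmemo⟩, hco'⟩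
  have hp12 : (({o} : Finset (Fin n)), S3) ≠ ((S3, ({o} : Finset (Fin n)))) := by
    intro h
    exact hne3 (congrArg Prod.fst h)
  have hcard_ge : 2 ≤ F.card := by
    have hsub : ({(({o} : Finset (Fin n)), S3), (S3, ({o} : Finset (Fin n)))} :
        Finset (Finset (Fin n) × Finset (Fin n))) ⊆ F := by
      intro p hp
      rcases Finset.mem_insert.mp hp with rfl | hp
      · exact hp1
      · rw [Finset.mem_singleton.mp hp]; exact hp2
    calc 2 = ({(({o} : Finset (Fin n)), S3), (S3, ({o} : Finset (Fin n)))} :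
          Finset (Finset (Fin n) × Finset (Fin n))).card := by
          rw [Finset.card_insert_of_notMem (by simpa using hp12), Finset.card_singleton]
      _ ≤ F.card := Finset.card_le_card hsub
  have hcard_le : F.card ≤ 2 := star_filter_card_le hcp
  have hcard : F.card = 2 := le_antisymm hcard_le hcard_ge
  have hcount : cpCount (starGraph n) π = 1 := by
    rw [cpCount, ← hFdef, hcard]
  -- now compute the sSup
  have h1mem : (1 : ℕ) ∈ {k | ∃ π, IsCPartition (starGraph n) π ∧ k = cpCount (starGraph n) π} :=
    ⟨π, hcp, hcount.symm⟩
  have hub : ∀ k ∈ {k | ∃ π, IsCPartition (starGraph n) π ∧ k = cpCount (starGraph n) π},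
      k ≤ 1 := by
    rintro k ⟨π', hπ', rfl⟩
    have := star_filter_card_le hπ'
    calc cpCount (starGraph n) π' ≤ 2 / 2 := Nat.div_le_div_right this
      _ = 1 := rfl
  exact IsGreatest.csSup_eq ⟨h1mem, hub⟩
end

section
/- The path P_4 on four vertices satisfies c(P_4) = 4 and C(P_4) = 4; that is, its coalition count and coalition number both equal 4. -/
open scoped Classical

/-! ### Auxiliary material for `stmt_16` -/

lemma stmt16_union_classical (A B : Finset (Fin 4)) :
    @Union.union _ (@Finset.instUnion (Fin 4) (fun a b => Classical.propDecidable (a = b))) A B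
      = A ∪ B := by
  have h : (fun (a b : Fin 4) => Classical.propDecidable (a = b)) = instDecidableEqFin 4 := by
    funext a b; exact Subsingleton.elim _ _
  rw [h]

instance (priority := high) stmt16_decAdj4 : DecidableRel (SimpleGraph.pathGraph 4).Adj :=
  fun _ _ => decidable_of_iff _ (SimpleGraph.pathGraph_adj).symm

instance (priority := high) stmt16_decDom4 :
    DecidablePred (IsDomSet (SimpleGraph.pathGraph 4)) := fun S =>
  inferInstanceAs (Decidable (∀ v, v ∉ S → ∃ u ∈ S, (SimpleGraph.pathGraph 4).Adj u v))

lemma stmt16_coal_iff (A B : Finset (Fin 4)) :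
    IsCoalition (SimpleGraph.pathGraph 4) A B ↔
      (A ≠ B ∧ ¬ IsDomSet (SimpleGraph.pathGraph 4) A ∧ ¬ IsDomSet (SimpleGraph.pathGraph 4) B ∧
        IsDomSet (SimpleGraph.pathGraph 4) (A ∪ B)) := by
  unfold IsCoalition; rw [stmt16_union_classical]

instance (priority := high) stmt16_decCoal4 :
    ∀ A B : Finset (Fin 4), Decidable (IsCoalition (SimpleGraph.pathGraph 4) A B) := fun A B =>
  decidable_of_iff _ (stmt16_coal_iff A B).symm

/-- The singleton partition of `Fin 4`. -/
def stmt16_pi0 : Finset (Finset (Fin 4)) := {{0}, {1}, {2}, {3}}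

lemma stmt16_pi0_cpart : IsCPartition (SimpleGraph.pathGraph 4) stmt16_pi0 := by
  unfold IsCPartition stmt16_pi0; decide

lemma stmt16_filter_swap {α : Type*} (s : Finset α) (p : α → Prop)
    (h1 h2 : DecidablePred p) :
    @Finset.filter α p h1 s = @Finset.filter α p h2 s := by
  ext a; simp only [Finset.mem_filter]

lemma stmt16_count0 : cpCount (SimpleGraph.pathGraph 4) stmt16_pi0 = 4 := by
  unfold cpCount
  rw [stmt16_filter_swap (stmt16_pi0 ×ˢ stmt16_pi0)
    (fun p => IsCoalition (SimpleGraph.pathGraph 4) p.1 p.2) _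
    (fun p => stmt16_decCoal4 p.1 p.2)]
  rfl

lemma stmt16_card_le (π : Finset (Finset (Fin 4)))
    (hne : ∀ A ∈ π, A.Nonempty)
    (hd : ∀ A ∈ π, ∀ B ∈ π, A ≠ B → Disjoint A B) :
    π.card ≤ 4 ∧ ∑ A ∈ π, A.card ≤ 4 := by
  have hsum : ∑ A ∈ π, A.card ≤ 4 := by
    rw [← Finset.card_biUnion (fun A hA B hB hAB => hd A hA B hB hAB)]
    exact le_trans (Finset.card_le_univ _) (by simp)
  refine ⟨le_trans ?_ hsum, hsum⟩
  rw [Finset.card_eq_sum_ones]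
  exact Finset.sum_le_sum fun A hA => Finset.card_pos.mpr (hne A hA)

lemma stmt16_eq_pi0 (π : Finset (Finset (Fin 4)))
    (h : IsCPartition (SimpleGraph.pathGraph 4) π) (hc : π.card = 4) : π = stmt16_pi0 := by
  obtain ⟨hne, hd, hcov, -⟩ := h
  have hsum : ∑ A ∈ π, A.card ≤ 4 := (stmt16_card_le π hne hd).2
  have hone : ∀ A ∈ π, A.card = 1 := by
    by_contra hcon
    push_neg at hcon
    obtain ⟨A0, hA0, hA0c⟩ := hcon
    have h1 : ∀ A ∈ π, 1 ≤ A.card := fun A hA => Finset.card_pos.mpr (hne A hA)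
    have hlt : (∑ _A ∈ π, 1) < ∑ A ∈ π, A.card :=
      Finset.sum_lt_sum h1 ⟨A0, hA0, lt_of_le_of_ne (h1 A0 hA0) (Ne.symm hA0c)⟩
    rw [Finset.sum_const, smul_eq_mul, mul_one, hc] at hlt
    omega
  ext B
  constructor
  · intro hB
    obtain ⟨v, hv⟩ := Finset.card_eq_one.mp (hone B hB)
    subst hv
    fin_cases v <;> simp [stmt16_pi0]
  · intro hB
    have hB' : B = {0} ∨ B = {1} ∨ B = {2} ∨ B = {3} := by
      simpa [stmt16_pi0] using hB
    have key : ∀ v : Fin 4, ({v} : Finset (Fin 4)) ∈ π := by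
      intro v
      obtain ⟨A, hA, hvA⟩ := hcov v
      obtain ⟨w, hw⟩ := Finset.card_eq_one.mp (hone A hA)
      subst hw
      rw [Finset.mem_singleton] at hvA
      subst hvA
      exact hA
    rcases hB' with rfl | rfl | rfl | rfl <;> exact key _

lemma stmt16_count_le (π : Finset (Finset (Fin 4)))
    (h : IsCPartition (SimpleGraph.pathGraph 4) π) :
    cpCount (SimpleGraph.pathGraph 4) π ≤ 4 := by
  have hπ4 : π.card ≤ 4 := (stmt16_card_le π h.1 h.2.1).1
  rcases eq_or_lt_of_le hπ4 with heq | hlt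
  · rw [stmt16_eq_pi0 π h heq, stmt16_count0]
  · have h3 : π.card ≤ 3 := by omega
    unfold cpCount
    rw [stmt16_filter_swap (π ×ˢ π)
      (fun p => IsCoalition (SimpleGraph.pathGraph 4) p.1 p.2) _
      (fun p => stmt16_decCoal4 p.1 p.2)]
    calc _ ≤ (π ×ˢ π).card / 2 := Nat.div_le_div_right (Finset.card_filter_le _ _)
      _ ≤ 9 / 2 := Nat.div_le_div_right
          (by rw [Finset.card_product]; exact Nat.mul_le_mul h3 h3)
      _ ≤ 4 := by norm_num

/-- The path `P_4` satisfies `c(P_4) = 4` and `C(P_4) = 4`. -/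
theorem stmt_16 :
    coalitionCount (SimpleGraph.pathGraph 4) = 4 ∧
    coalitionNumber (SimpleGraph.pathGraph 4) = 4 := by
  have hcard0 : stmt16_pi0.card = 4 := by decide
  constructor
  · unfold coalitionCount
    have hmem : (4 : ℕ) ∈ {k | ∃ π, IsCPartition (SimpleGraph.pathGraph 4) π ∧
        k = cpCount (SimpleGraph.pathGraph 4) π} :=
      ⟨stmt16_pi0, stmt16_pi0_cpart, stmt16_count0.symm⟩
    have hub : ∀ k ∈ {k | ∃ π, IsCPartition (SimpleGraph.pathGraph 4) π ∧
        k = cpCount (SimpleGraph.pathGraph 4) π}, k ≤ 4 := by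
      rintro k ⟨π, hπ, rfl⟩
      exact stmt16_count_le π hπ
    refine le_antisymm (csSup_le ?_ hub) (le_csSup ?_ hmem)
    · exact ⟨4, hmem⟩
    · exact ⟨4, fun _ hk => hub _ hk⟩
  · unfold coalitionNumber
    have hmem : (4 : ℕ) ∈ {k | ∃ π, IsCPartition (SimpleGraph.pathGraph 4) π ∧
        k = π.card} := ⟨stmt16_pi0, stmt16_pi0_cpart, hcard0.symm⟩
    have hub : ∀ k ∈ {k | ∃ π, IsCPartition (SimpleGraph.pathGraph 4) π ∧
        k = π.card}, k ≤ 4 := by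
      rintro k ⟨π, hπ, rfl⟩
      exact (stmt16_card_le π hπ.1 hπ.2.1).1
    refine le_antisymm (csSup_le ?_ hub) (le_csSup ?_ hmem)
    · exact ⟨4, hmem⟩
    · exact ⟨4, fun _ hk => hub _ hk⟩
end
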